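/- arXiv:1502.06926 — 2 statements merged into one kernel-verified Lean document; each statement's English description precedes it below -/
import Mathlib

section
/- Suppose A ⊆ Φ⁺ and the 2-closure Ā (the smallest closed subset of Φ⁺ containing A) is finite and biclosed. Then Ā = cone(A) ∩ Φ. -/
open Pointwise

noncomputable section

/-- The set of nonnegative linear combinations of elements of `X`. -/
def coneOf {V : Type*} [AddCommGroup V] [Module ℝ V] (X : Set V) : Set V :=
  {v | ∃ (n : ℕ) (c : Fin n → ℝ) (f : Fin n → V),
    (∀ i, 0 ≤ c i) ∧ (∀ i, f i ∈ X) ∧ ∑ i, c i • f i = v}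

section ConeLemmas

variable {V : Type*} [AddCommGroup V] [Module ℝ V] {X Y : Set V} {v w : V}

theorem mem_coneOf_self (h : v ∈ X) : v ∈ coneOf X :=
  ⟨1, fun _ => 1, fun _ => v, fun _ => zero_le_one, fun _ => h, by simp⟩

theorem zero_mem_coneOf : (0 : V) ∈ coneOf X :=
  ⟨0, fun i => i.elim0, fun i => i.elim0, fun i => i.elim0, fun i => i.elim0, by simp⟩

theorem coneOf_add_mem (hv : v ∈ coneOf X) (hw : w ∈ coneOf X) : v + w ∈ coneOf X := by
  obtain ⟨n, c, f, hc, hf, hsum⟩ := hv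
  obtain ⟨m, d, g, hd, hg, hsum'⟩ := hw
  refine ⟨n + m, Fin.addCases c d, Fin.addCases f g, ?_, ?_, ?_⟩
  · intro i
    refine Fin.addCases (fun i => ?_) (fun i => ?_) i <;> simp [hc, hd]
  · intro i
    refine Fin.addCases (fun i => ?_) (fun i => ?_) i <;> simp [hf, hg]
  · rw [Fin.sum_univ_add]
    simp only [Fin.addCases_left, Fin.addCases_right, hsum, hsum']

theorem coneOf_smul_mem {t : ℝ} (ht : 0 ≤ t) (hv : v ∈ coneOf X) : t • v ∈ coneOf X := by
  obtain ⟨n, c, f, hc, hf, hsum⟩ := hv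
  exact ⟨n, fun i => t * c i, f, fun i => mul_nonneg ht (hc i), hf, by
    simp only [mul_smul, ← Finset.smul_sum, hsum]⟩

theorem coneOf_sum_mem {ι : Type*} (s : Finset ι) (c : ι → ℝ) (f : ι → V)
    (hc : ∀ i ∈ s, 0 ≤ c i) (hf : ∀ i ∈ s, f i ∈ coneOf X) :
    ∑ i ∈ s, c i • f i ∈ coneOf X := by
  classical
  induction s using Finset.induction_on with
  | empty => simpa using zero_mem_coneOf
  | insert a s hnotmem ih =>
    rw [Finset.sum_insert hnotmem]
    exact coneOf_add_mem
      (coneOf_smul_mem (hc a (Finset.mem_insert_self a s)) (hf a (Finset.mem_insert_self a s)))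
      (ih (fun i hi => hc i (Finset.mem_insert_of_mem hi))
          (fun i hi => hf i (Finset.mem_insert_of_mem hi)))

theorem coneOf_mono (h : X ⊆ Y) : coneOf X ⊆ coneOf Y := by
  rintro v ⟨n, c, f, hc, hf, hsum⟩
  exact ⟨n, c, f, hc, fun i => h (hf i), hsum⟩

theorem coneOf_subset_coneOf (h : X ⊆ coneOf Y) : coneOf X ⊆ coneOf Y := by
  rintro v ⟨n, c, f, hc, hf, rfl⟩
  exact coneOf_sum_mem _ _ _ (fun i _ => hc i) (fun i _ => h (hf i))

/-- Weak membership criterion: coefficients that vanish needn't have `f i ∈ X`. -/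
theorem mem_coneOf_of_weak {n : ℕ} {c : Fin n → ℝ} {f : Fin n → V}
    (hc : ∀ i, 0 ≤ c i) (hf : ∀ i, c i ≠ 0 → f i ∈ X) :
    ∑ i, c i • f i ∈ coneOf X := by
  classical
  by_cases h : ∀ i, c i = 0
  · have : ∑ i, c i • f i = 0 := by
      apply Finset.sum_eq_zero; intro i _; rw [h i, zero_smul]
    rw [this]; exact zero_mem_coneOf
  · push_neg at h
    obtain ⟨i₀, hi₀⟩ := h
    have hjunk : f i₀ ∈ X := hf i₀ hi₀
    refine ⟨n, c, fun i => if c i = 0 then f i₀ else f i, hc, ?_, ?_⟩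
    · intro i
      by_cases h : c i = 0 <;> simp [h, hjunk, hf i]
    · apply Finset.sum_congr rfl
      intro i _
      by_cases h : c i = 0 <;> simp [h]

theorem mem_coneOf_pair {a b : V} (h : v ∈ coneOf ({a, b} : Set V)) :
    ∃ x y : ℝ, 0 ≤ x ∧ 0 ≤ y ∧ v = x • a + y • b := by
  classical
  obtain ⟨n, c, f, hc, hf, rfl⟩ := h
  refine ⟨∑ i ∈ Finset.univ.filter (fun i => f i = a), c i,
    ∑ i ∈ Finset.univ.filter (fun i => ¬ f i = a), c i,
    Finset.sum_nonneg (fun i _ => hc i), Finset.sum_nonneg (fun i _ => hc i), ?_⟩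
  rw [← Finset.sum_filter_add_sum_filter_not Finset.univ (fun i => f i = a)]
  rw [Finset.sum_smul, Finset.sum_smul]
  congr 1
  · apply Finset.sum_congr rfl
    intro i hi
    rw [(Finset.mem_filter.1 hi).2]
  · apply Finset.sum_congr rfl
    intro i hi
    have h2 := (Finset.mem_filter.1 hi).2
    have := hf i
    rcases this with h' | h'
    · exact absurd h' h2
    · rw [h']

theorem mem_coneOf_pair' {a b : V} {x y : ℝ} (hx : 0 ≤ x) (hy : 0 ≤ y) :
    x • a + y • b ∈ coneOf ({a, b} : Set V) :=
  coneOf_add_mem (coneOf_smul_mem hx (mem_coneOf_self (by simp)))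
    (coneOf_smul_mem hy (mem_coneOf_self (by simp)))

theorem mem_coneOf_insert {a : V} (h : v ∈ coneOf (insert a X)) :
    ∃ (t : ℝ) (y : V), 0 ≤ t ∧ y ∈ coneOf X ∧ v = t • a + y := by
  classical
  obtain ⟨n, c, f, hc, hf, rfl⟩ := h
  refine ⟨∑ i ∈ Finset.univ.filter (fun i => f i = a), c i,
    ∑ i, (if f i = a then 0 else c i) • f i, Finset.sum_nonneg (fun i _ => hc i), ?_, ?_⟩
  · apply mem_coneOf_of_weak
    · intro i; by_cases h : f i = a <;> simp [h, hc i]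
    · intro i hi
      by_cases h : f i = a
      · simp [h] at hi
      · rcases hf i with h' | h'
        · exact absurd h' h
        · exact h'
  · rw [← Finset.sum_filter_add_sum_filter_not Finset.univ (fun i => f i = a), Finset.sum_smul]
    congr 1
    · apply Finset.sum_congr rfl
      intro i hi
      rw [(Finset.mem_filter.1 hi).2]
    · rw [Finset.sum_filter]
      apply Finset.sum_congr rfl
      intro i _
      by_cases h : f i = a <;> simp [h]

theorem coneOf_image_mem {v : V} (e : V →ₗ[ℝ] V) (h : v ∈ coneOf X) :
    e v ∈ coneOf (e '' X) := by
  obtain ⟨n, c, f, hc, hf, rfl⟩ := h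
  exact ⟨n, c, fun i => e (f i), hc, fun i => ⟨f i, hf i, rfl⟩, by
    rw [map_sum]; simp only [map_smul]⟩

end ConeLemmas

/-- The Chebyshev-like sequence `u 0 = 0`, `u 1 = 1`, `u (n+2) = 2c * u (n+1) - u n`. -/
def chebSeq (c : ℝ) : ℕ → ℝ
  | 0 => 0
  | 1 => 1
  | (n + 2) => 2 * c * chebSeq c (n + 1) - chebSeq c n

theorem chebSeq_zero (c : ℝ) : chebSeq c 0 = 0 := rfl
theorem chebSeq_one (c : ℝ) : chebSeq c 1 = 1 := rfl
theorem chebSeq_add_two (c : ℝ) (n : ℕ) :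
    chebSeq c (n + 2) = 2 * c * chebSeq c (n + 1) - chebSeq c n := rfl

theorem chebSeq_eq_sin {θ : ℝ} (hθ : Real.sin θ ≠ 0) (l : ℕ) :
    chebSeq (Real.cos θ) l = Real.sin (l * θ) / Real.sin θ := by
  induction l using Nat.strong_induction_on with
  | _ l ih =>
    match l with
    | 0 => simp [chebSeq_zero]
    | 1 => simp [chebSeq_one, div_self hθ]
    | (n + 2) =>
      rw [chebSeq_add_two, ih (n+1) (by omega), ih n (by omega)]
      have h1 : ((n:ℝ) + 2) * θ = ((n:ℝ)+1) * θ + θ := by ring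
      have h2 : (n:ℝ) * θ = ((n:ℝ)+1) * θ - θ := by ring
      push_cast
      rw [h1, h2, Real.sin_add, Real.sin_sub]
      field_simp
      ring

theorem chebSeq_nonneg_finite {m : ℕ} (hm : 2 ≤ m) {l : ℕ} (hl : l ≤ m) :
    0 ≤ chebSeq (Real.cos (Real.pi / m)) l := by
  have hm0 : (0:ℝ) < m := by positivity
  have hθpos : 0 < Real.pi / m := by positivity
  have hθlt : Real.pi / m < Real.pi := by
    rw [div_lt_iff₀ hm0]
    have : (2:ℝ) ≤ m := by exact_mod_cast hm
    nlinarith [Real.pi_pos]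
  have hsin : 0 < Real.sin (Real.pi / m) :=
    Real.sin_pos_of_pos_of_lt_pi hθpos hθlt
  rw [chebSeq_eq_sin (ne_of_gt hsin)]
  apply div_nonneg _ (le_of_lt hsin)
  apply Real.sin_nonneg_of_nonneg_of_le_pi
  · positivity
  · rw [← mul_div_assoc]
    rw [div_le_iff₀ hm0]
    have : (l:ℝ) ≤ m := by exact_mod_cast hl
    nlinarith [Real.pi_pos]

theorem chebSeq_nonneg_infinite {c : ℝ} (hc : 1 ≤ c) (l : ℕ) :
    0 ≤ chebSeq c l ∧ chebSeq c l ≤ chebSeq c (l + 1) := by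
  induction l using Nat.strong_induction_on with
  | _ l ih =>
    match l with
    | 0 => simp [chebSeq_zero, chebSeq_one]
    | (n + 1) =>
      obtain ⟨h1, h2⟩ := ih n (by omega)
      constructor
      · linarith
      · rw [chebSeq_add_two]
        nlinarith

/-! ### Descent stripping for Coxeter systems -/

namespace CoxeterSystem

variable {B : Type*} {W : Type*} [Group W] {M : CoxeterMatrix B} (cs : CoxeterSystem M W)

local prefix:100 "s" => cs.simple
local prefix:100 "π" => cs.wordProd
local prefix:100 "ℓ" => cs.length

theorem strip_descents (n : ℕ) : ∀ w : W, ℓ w = n → ∀ i j : B, i ≠ j →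
    ¬ cs.IsRightDescent w i →
    ∃ (u : W) (k : ℕ), ¬ cs.IsRightDescent u i ∧ ¬ cs.IsRightDescent u j ∧
      ℓ u + k = ℓ w ∧ w = u * π (alternatingWord i j k) := by
  induction n using Nat.strong_induction_on with
  | _ n ih =>
    intro w hw i j hij hwi
    by_cases hwj : cs.IsRightDescent w j
    · set w' := w * s j with hw'
      have hlen : ℓ w' + 1 = ℓ w := cs.isRightDescent_iff.1 hwj
      have hw'j : ¬ cs.IsRightDescent w' j := by
        intro h
        unfold CoxeterSystem.IsRightDescent at h
        rw [hw', simple_mul_simple_cancel_right, ← hw'] at h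
        omega
      obtain ⟨u, k, huj, hui, hlen', hfact⟩ :=
        ih (ℓ w') (by omega) w' rfl j i (Ne.symm hij) hw'j
      refine ⟨u, k + 1, hui, huj, by omega, ?_⟩
      have : w = w' * s j := by rw [hw', simple_mul_simple_cancel_right]
      rw [this, hfact, alternatingWord_succ, wordProd_concat, mul_assoc]
    · exact ⟨w, 0, hwi, hwj, by simp, by simp [alternatingWord]⟩

end CoxeterSystem

theorem coneOf_empty_subset {V : Type*} [AddCommGroup V] [Module ℝ V] :
    coneOf (∅ : Set V) ⊆ {0} := by
  rintro v ⟨n, c, f, hc, hf, rfl⟩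
  cases n with
  | zero => simp
  | succ n => exact absurd (hf 0) (Set.notMem_empty _)

theorem coneOf_image_mem_equiv {V : Type*} [AddCommGroup V] [Module ℝ V]
    (e : V ≃ₗ[ℝ] V) {X : Set V} {v : V} (h : v ∈ coneOf X) : e v ∈ coneOf (⇑e '' X) := by
  have := coneOf_image_mem (e.toLinearMap) h
  simpa using this

theorem exists_min_rel {α : Type*} (r : α → α → Prop)
    (htrans : ∀ a b c, r a b → r b c → r a c) (hirr : ∀ a, ¬ r a a)
    {S : Set α} (hfin : S.Finite) : S.Nonempty → ∃ m ∈ S, ∀ x ∈ S, ¬ r x m := by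
  refine Set.Finite.induction_on
    (motive := fun T _ => T.Nonempty → ∃ m ∈ T, ∀ x ∈ T, ¬ r x m) S hfin
    (fun h => absurd h.choose_spec (Set.notMem_empty _)) ?_
  intro a s hnotmem hsfin ih _
  by_cases hs : s.Nonempty
  · obtain ⟨m, hm, hmin⟩ := ih hs
    by_cases ham : r a m
    · refine ⟨a, Set.mem_insert _ _, ?_⟩
      rintro x (rfl | hx)
      · exact hirr _
      · intro hrxa
        exact hmin x hx (htrans x a m hrxa ham)
    · refine ⟨m, Set.mem_insert_of_mem _ hm, ?_⟩
      rintro x (rfl | hx)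
      · exact ham
      · exact hmin x hx
  · rw [Set.not_nonempty_iff_eq_empty] at hs
    subst hs
    refine ⟨a, Set.mem_insert _ _, ?_⟩
    rintro x (rfl | hx)
    · exact hirr _
    · exact absurd hx (Set.notMem_empty x)

/-- A geometric representation of the Coxeter system `cs` on the real quadratic
space `(V, bil)`: each simple generator acts as the `bil`-reflection in its simple
root, and the simple roots form a simple system. -/
structure GeomRep {B : Type*} [Fintype B] {W : Type*} [Group W]
    (M : CoxeterMatrix B) (cs : CoxeterSystem M W)
    (V : Type*) [AddCommGroup V] [Module ℝ V] where
  /-- the symmetric bilinear form -/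
  bil : LinearMap.BilinForm ℝ V
  bil_symm : ∀ u v : V, bil u v = bil v u
  /-- the representation of `W` by linear automorphisms of `V` -/
  π : W →* (V ≃ₗ[ℝ] V)
  /-- the simple roots -/
  α : B → V
  norm_one : ∀ i, bil (α i) (α i) = 1
  simple_refl : ∀ i v, π (cs.simple i) v = v - (2 * bil (α i) v) • α i
  pos_indep : ∀ c : B → ℝ, (∀ i, 0 ≤ c i) → ∑ i, c i • α i = 0 → ∀ i, c i = 0
  angle_finite : ∀ i j, i ≠ j → M.M i j ≠ 0 →
    bil (α i) (α j) = - Real.cos (Real.pi / (M.M i j : ℝ))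
  angle_infinite : ∀ i j, i ≠ j → M.M i j = 0 → bil (α i) (α j) ≤ -1

namespace GeomRep

variable {B : Type*} [Fintype B] {W : Type*} [Group W]
  {M : CoxeterMatrix B} {cs : CoxeterSystem M W}
  {V : Type*} [AddCommGroup V] [Module ℝ V]

/-- The root system `Φ = W(Δ)`. -/
def Phi (G : GeomRep M cs V) : Set V := {v | ∃ (w : W) (i : B), G.π w (G.α i) = v}

/-- The positive roots `Φ⁺ = cone(Δ) ∩ Φ`. -/
def PhiPos (G : GeomRep M cs V) : Set V := G.Phi ∩ coneOf (Set.range G.α)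

/-- The (left) inversion set `N(w) = Φ⁺ ∩ w(Φ⁻)`. -/
def N (G : GeomRep M cs V) (w : W) : Set V := G.PhiPos ∩ (G.π w '' (-G.PhiPos))

/-- `A ⊆ Φ⁺` is closed if for all `α, β ∈ A`, every root in `cone(α,β)` lies in `A`. -/
def IsClosedSet (G : GeomRep M cs V) (A : Set V) : Prop :=
  ∀ a ∈ A, ∀ b ∈ A, coneOf {a, b} ∩ G.Phi ⊆ A

/-- `A` is biclosed if `A` and `Φ⁺ \ A` are both closed. -/
def IsBiclosed (G : GeomRep M cs V) (A : Set V) : Prop :=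
  G.IsClosedSet A ∧ G.IsClosedSet (G.PhiPos \ A)

/-- `A` is convex if `A = cone(A) ∩ Φ`. -/
def IsConvexSet (G : GeomRep M cs V) (A : Set V) : Prop :=
  A = coneOf A ∩ G.Phi

/-- `A` is biconvex if `A` and `Φ⁺ \ A` are both convex. -/
def IsBiconvex (G : GeomRep M cs V) (A : Set V) : Prop :=
  G.IsConvexSet A ∧ G.IsConvexSet (G.PhiPos \ A)

/-- `A ⊆ Φ⁺` is separable if `cone(A) ∩ cone(Φ⁺ \ A) = {0}`. -/
def IsSeparable (G : GeomRep M cs V) (A : Set V) : Prop :=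
  coneOf A ∩ coneOf (G.PhiPos \ A) = {0}

variable (G : GeomRep M cs V)

theorem pi_mul_apply (w₁ w₂ : W) (v : V) : G.π (w₁ * w₂) v = G.π w₁ (G.π w₂ v) := by
  rw [map_mul]; rfl

theorem pi_one_apply (v : V) : G.π 1 v = v := by rw [map_one]; rfl

theorem bil_invariant (w : W) : ∀ u v : V, G.bil (G.π w u) (G.π w v) = G.bil u v := by
  induction w using cs.simple_induction with
  | simple i =>
    intro u v
    rw [G.simple_refl, G.simple_refl]
    simp only [map_sub, map_smul, LinearMap.sub_apply, LinearMap.smul_apply, smul_eq_mul]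
    rw [G.norm_one, G.bil_symm u (G.α i)]
    ring
  | one => intro u v; rw [G.pi_one_apply, G.pi_one_apply]
  | mul w₁ w₂ h₁ h₂ =>
    intro u v
    rw [G.pi_mul_apply, G.pi_mul_apply, h₁, h₂]

theorem alpha_mem_Phi (i : B) : G.α i ∈ G.Phi := ⟨1, i, G.pi_one_apply _⟩

theorem pi_mem_Phi {γ : V} (w : W) (h : γ ∈ G.Phi) : G.π w γ ∈ G.Phi := by
  obtain ⟨w', i, rfl⟩ := h
  exact ⟨w * w', i, G.pi_mul_apply w w' _⟩

theorem pi_simple_self (i : B) : G.π (cs.simple i) (G.α i) = - G.α i := by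
  rw [G.simple_refl, G.norm_one]
  norm_num
  rw [two_smul]
  abel

theorem neg_mem_Phi {γ : V} (h : γ ∈ G.Phi) : -γ ∈ G.Phi := by
  obtain ⟨w, i, rfl⟩ := h
  refine ⟨w * cs.simple i, i, ?_⟩
  rw [G.pi_mul_apply, G.pi_simple_self, map_neg]

theorem bil_root_self {γ : V} (h : γ ∈ G.Phi) : G.bil γ γ = 1 := by
  obtain ⟨w, i, rfl⟩ := h
  rw [G.bil_invariant, G.norm_one]

theorem root_ne_zero {γ : V} (h : γ ∈ G.Phi) : γ ≠ 0 := by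
  intro h0
  have := G.bil_root_self h
  rw [h0] at this
  simp at this

theorem mem_coneRange_iff {v : V} :
    v ∈ coneOf (Set.range G.α) ↔ ∃ e : B → ℝ, (∀ b, 0 ≤ e b) ∧ ∑ b, e b • G.α b = v := by
  classical
  constructor
  · rintro ⟨n, c, f, hc, hf, rfl⟩
    choose g hg using hf
    refine ⟨fun b => ∑ i, if g i = b then c i else 0,
      fun b => Finset.sum_nonneg fun i _ => by by_cases h : g i = b <;> simp [h, hc i], ?_⟩
    have : ∀ i : Fin n, ∑ b : B, (if g i = b then c i else 0) • G.α b = c i • f i := by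
      intro i
      have : ∀ b : B, (if g i = b then c i else 0) • G.α b
          = (if g i = b then c i • G.α b else 0) := by
        intro b; by_cases h : g i = b <;> simp [h]
      rw [Finset.sum_congr rfl (fun b _ => this b), Finset.sum_ite_eq]
      simp [hg i]
    calc ∑ b : B, (∑ i : Fin n, if g i = b then c i else 0) • G.α b
        = ∑ b : B, ∑ i : Fin n, (if g i = b then c i else 0) • G.α b := by
          simp [Finset.sum_smul]
      _ = ∑ i : Fin n, ∑ b : B, (if g i = b then c i else 0) • G.α b := Finset.sum_comm
      _ = ∑ i : Fin n, c i • f i := Finset.sum_congr rfl (fun i _ => this i)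
  · rintro ⟨e, he, rfl⟩
    exact coneOf_sum_mem _ _ _ (fun b _ => he b)
      (fun b _ => mem_coneOf_self (Set.mem_range_self b))

theorem cone_eq_zero {v : V} (h1 : v ∈ coneOf (Set.range G.α))
    (h2 : -v ∈ coneOf (Set.range G.α)) : v = 0 := by
  obtain ⟨e, he, hsum⟩ := G.mem_coneRange_iff.1 h1
  obtain ⟨e', he', hsum'⟩ := G.mem_coneRange_iff.1 h2
  have hz : ∑ b, (e b + e' b) • G.α b = 0 := by
    simp only [add_smul, Finset.sum_add_distrib, hsum, hsum', add_neg_cancel]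
  have := G.pos_indep (fun b => e b + e' b) (fun b => add_nonneg (he b) (he' b)) hz
  have hez : ∀ b, e b = 0 := by
    intro b
    have h1 : e b + e' b = 0 := this b
    have := he b; have := he' b
    linarith
  rw [← hsum]
  apply Finset.sum_eq_zero
  intro b _
  rw [hez b, zero_smul]

theorem neg_alpha_not_mem_cone (i : B) : -G.α i ∉ coneOf (Set.range G.α) := by
  intro h
  have : G.α i = 0 := G.cone_eq_zero (mem_coneOf_self (Set.mem_range_self i)) h
  exact G.root_ne_zero (G.alpha_mem_Phi i) this

theorem bil_alpha_nonpos {i j : B} (h : i ≠ j) : G.bil (G.α i) (G.α j) ≤ 0 := by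
  by_cases hM : M.M i j = 0
  · linarith [G.angle_infinite i j h hM]
  · rw [G.angle_finite i j h hM]
    have hm2 : 2 ≤ M.M i j := by
      have := M.off_diagonal i j h
      omega
    have hm0 : (0:ℝ) < (M.M i j : ℝ) := by positivity
    have h1 : 0 ≤ Real.pi / (M.M i j : ℝ) := by positivity
    have h2 : Real.pi / (M.M i j : ℝ) ≤ Real.pi / 2 := by
      apply div_le_div_of_nonneg_left Real.pi_pos.le (by norm_num)
      exact_mod_cast hm2
    have := Real.cos_nonneg_of_mem_Icc ⟨by linarith [Real.pi_pos], h2⟩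
    linarith

theorem mem_PhiPos_of_cone {γ : V} (h1 : γ ∈ G.Phi) (h2 : γ ∈ coneOf (Set.range G.α)) :
    γ ∈ G.PhiPos := ⟨h1, h2⟩

theorem alpha_mem_PhiPos (i : B) : G.α i ∈ G.PhiPos :=
  ⟨G.alpha_mem_Phi i, mem_coneOf_self (Set.mem_range_self i)⟩

theorem PhiPos_subset_cone : G.PhiPos ⊆ coneOf (Set.range G.α) := fun _ h => h.2

theorem PhiPos_subset_Phi : G.PhiPos ⊆ G.Phi := fun _ h => h.1

theorem not_neg_mem_PhiPos {γ : V} (h : γ ∈ G.PhiPos) : -γ ∉ G.PhiPos := by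
  intro h'
  exact G.root_ne_zero h.1 (G.cone_eq_zero h.2 h'.2)


theorem alt_apply (i j : B) (k : ℕ) :
    G.π (cs.wordProd (CoxeterSystem.alternatingWord i j k)) (G.α i) =
      (if Even k then chebSeq (-(G.bil (G.α i) (G.α j))) (k+1)
        else chebSeq (-(G.bil (G.α i) (G.α j))) k) • G.α i +
      (if Even k then chebSeq (-(G.bil (G.α i) (G.α j))) k
        else chebSeq (-(G.bil (G.α i) (G.α j))) (k+1)) • G.α j := by
  set c := -(G.bil (G.α i) (G.α j)) with hc
  induction k with
  | zero =>
    simp [CoxeterSystem.alternatingWord, G.pi_one_apply, chebSeq_zero, chebSeq_one]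
  | succ k ih =>
    rw [CoxeterSystem.alternatingWord_succ', CoxeterSystem.wordProd_cons, G.pi_mul_apply, ih]
    rcases Nat.even_or_odd k with hk | hk
    · have hk1 : ¬ Even (k + 1) := by simp [Nat.even_add_one, hk]
      simp only [if_pos hk, if_neg hk1]
      rw [G.simple_refl]
      simp only [map_add, map_smul, smul_eq_mul]
      rw [G.norm_one, G.bil_symm (G.α j) (G.α i)]
      rw [chebSeq_add_two]
      have hbil : G.bil (G.α i) (G.α j) = -c := by rw [hc]; ring
      rw [hbil]
      module
    · have hk1 : Even (k + 1) := Nat.even_add_one.2 (Nat.not_even_iff_odd.2 hk)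
      simp only [if_neg (Nat.not_even_iff_odd.2 hk), if_pos hk1]
      rw [G.simple_refl]
      simp only [map_add, map_smul, smul_eq_mul]
      rw [G.norm_one]
      rw [chebSeq_add_two]
      have hbil : G.bil (G.α i) (G.α j) = -c := by rw [hc]; ring
      rw [hbil]
      module

theorem pi_alpha_mem_cone_aux (n : ℕ) : ∀ w : W, cs.length w = n → ∀ i : B,
    ¬ cs.IsRightDescent w i → G.π w (G.α i) ∈ coneOf (Set.range G.α) := by
  induction n using Nat.strong_induction_on with
  | _ n ih =>
    intro w hw i hwi
    by_cases hone : w = 1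
    · rw [hone, G.pi_one_apply]
      exact mem_coneOf_self (Set.mem_range_self i)
    · obtain ⟨j, hj⟩ := cs.exists_rightDescent_of_ne_one hone
      have hij : i ≠ j := by rintro rfl; exact hwi hj
      obtain ⟨u, k, hui, huj, hlen, hfact⟩ :=
        cs.strip_descents (cs.length w) w rfl i j hij hwi
      have hk0 : k ≠ 0 := by
        rintro rfl
        rw [show CoxeterSystem.alternatingWord i j 0 = [] from rfl,
          CoxeterSystem.wordProd_nil, mul_one] at hfact
        rw [hfact] at hj
        exact huj hj
      -- the length of u is smaller
      have hlt : cs.length u < n := by omega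
      -- bound on k
      have hbound : M.M i j ≠ 0 → k + 1 ≤ M.M i j := by
        intro hM
        have hm1 : 1 ≤ M.M i j := Nat.one_le_iff_ne_zero.2 hM
        have hkle : k ≤ M.M i j := by
          by_contra hgt
          push_neg at hgt
          have hnr := cs.not_isReduced_alternatingWord i j hM hgt
          have hne : cs.length (cs.wordProd (CoxeterSystem.alternatingWord i j k)) ≠ k := by
            intro h
            exact hnr (by rwa [CoxeterSystem.IsReduced, CoxeterSystem.length_alternatingWord])
          have hle : cs.length (cs.wordProd (CoxeterSystem.alternatingWord i j k)) ≤ k := by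
            have := cs.length_wordProd_le (CoxeterSystem.alternatingWord i j k)
            rwa [CoxeterSystem.length_alternatingWord] at this
          have := cs.length_mul_le u (cs.wordProd (CoxeterSystem.alternatingWord i j k))
          rw [← hfact] at this
          omega
        have hkne : k ≠ M.M i j := by
          rintro rfl
          -- then w * s i would be shorter, contradicting ¬descent
          have heq : w * cs.simple i =
              u * cs.wordProd (CoxeterSystem.alternatingWord j i (M.M i j + 1)) := by
            rw [hfact, mul_assoc, ← CoxeterSystem.wordProd_concat,
              ← CoxeterSystem.alternatingWord_succ]
          have hsub : cs.wordProd (CoxeterSystem.alternatingWord j i (M.M i j + 1)) =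
              cs.wordProd (CoxeterSystem.alternatingWord i j (M.M j i * 2 - (M.M i j + 1))) := by
            apply cs.prod_alternatingWord_eq_prod_alternatingWord_sub j i
            rw [M.symmetric j i]
            omega
          have harith : M.M j i * 2 - (M.M i j + 1) = M.M i j - 1 := by
            rw [M.symmetric j i]; omega
          rw [harith] at hsub
          have hlen2 : cs.length (w * cs.simple i) ≤ cs.length u + (M.M i j - 1) := by
            rw [heq, hsub]
            calc cs.length (u * cs.wordProd (CoxeterSystem.alternatingWord i j (M.M i j - 1)))
                ≤ cs.length u + cs.length
                    (cs.wordProd (CoxeterSystem.alternatingWord i j (M.M i j - 1))) :=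
                  cs.length_mul_le _ _
              _ ≤ cs.length u + (M.M i j - 1) := by
                  have := cs.length_wordProd_le (CoxeterSystem.alternatingWord i j (M.M i j - 1))
                  rw [CoxeterSystem.length_alternatingWord] at this
                  omega
          have : cs.IsRightDescent w i := by
            unfold CoxeterSystem.IsRightDescent
            omega
          exact hwi this
        omega
      -- nonnegativity of the chebSeq coefficients
      set c : ℝ := -(G.bil (G.α i) (G.α j)) with hc
      have hcheb : 0 ≤ chebSeq c k ∧ 0 ≤ chebSeq c (k+1) := by
        by_cases hM : M.M i j = 0
        · have h1 : (1:ℝ) ≤ c := by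
            have := G.angle_infinite i j hij hM
            rw [hc]; linarith
          exact ⟨(chebSeq_nonneg_infinite h1 k).1, (chebSeq_nonneg_infinite h1 (k+1)).1⟩
        · have hm2 : 2 ≤ M.M i j := by
            have := M.off_diagonal i j hij
            omega
          have hcval : c = Real.cos (Real.pi / (M.M i j : ℝ)) := by
            rw [hc, G.angle_finite i j hij hM]; ring
          rw [hcval]
          exact ⟨chebSeq_nonneg_finite hm2 (by omega), chebSeq_nonneg_finite hm2 (hbound hM)⟩
      -- put it together
      rw [hfact, G.pi_mul_apply, G.alt_apply, ← hc]
      rw [map_add, map_smul, map_smul]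
      have hcone1 : G.π u (G.α i) ∈ coneOf (Set.range G.α) := ih _ hlt u rfl i hui
      have hcone2 : G.π u (G.α j) ∈ coneOf (Set.range G.α) := ih _ hlt u rfl j huj
      apply coneOf_add_mem
      · apply coneOf_smul_mem _ hcone1
        split_ifs
        · exact hcheb.2
        · exact hcheb.1
      · apply coneOf_smul_mem _ hcone2
        split_ifs
        · exact hcheb.1
        · exact hcheb.2

theorem pi_alpha_mem_PhiPos {w : W} {i : B} (h : ¬ cs.IsRightDescent w i) :
    G.π w (G.α i) ∈ G.PhiPos :=
  ⟨G.pi_mem_Phi w (G.alpha_mem_Phi i), G.pi_alpha_mem_cone_aux (cs.length w) w rfl i h⟩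

/-- Dichotomy: every root is positive or negative. -/
theorem root_pos_or_neg {γ : V} (h : γ ∈ G.Phi) : γ ∈ G.PhiPos ∨ -γ ∈ G.PhiPos := by
  obtain ⟨w, i, rfl⟩ := h
  by_cases hd : cs.IsRightDescent w i
  · right
    have hnd : ¬ cs.IsRightDescent (w * cs.simple i) i :=
      (cs.isRightDescent_iff_not_isRightDescent_mul).1 hd
    have := G.pi_alpha_mem_PhiPos hnd
    have heq : G.π (w * cs.simple i) (G.α i) = - G.π w (G.α i) := by
      rw [G.pi_mul_apply, G.pi_simple_self, map_neg]
    rwa [heq] at this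
  · left; exact G.pi_alpha_mem_PhiPos hd

theorem pi_simple_sq (i : B) (v : V) :
    G.π (cs.simple i) (G.π (cs.simple i) v) = v := by
  rw [← G.pi_mul_apply, cs.simple_mul_simple_self, G.pi_one_apply]

/-- `s i` maps positive roots other than `α i` to positive roots. -/
theorem simple_perm_PhiPos {β : V} (i : B) (hβ : β ∈ G.PhiPos) (hne : β ≠ G.α i) :
    G.π (cs.simple i) β ∈ G.PhiPos := by
  classical
  rcases G.root_pos_or_neg (G.pi_mem_Phi (cs.simple i) hβ.1) with h | h
  · exact h
  · exfalso
    set t : ℝ := 2 * G.bil (G.α i) β with ht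
    have hδ : -G.π (cs.simple i) β = t • G.α i - β := by
      rw [G.simple_refl]; abel
    obtain ⟨e, he, hesum⟩ := G.mem_coneRange_iff.1 hβ.2
    obtain ⟨d, hd, hdsum⟩ := G.mem_coneRange_iff.1 h.2
    rw [hδ] at hdsum
    have hcomb : ∑ b, (e b + d b) • G.α b = t • G.α i := by
      simp only [add_smul, Finset.sum_add_distrib, hesum, hdsum]
      abel
    by_cases htpos : 0 < t
    · -- α i = ∑ q b • α b with q nonneg
      set q : B → ℝ := fun b => (e b + d b) / t with hq
      have hqnn : ∀ b, 0 ≤ q b := fun b =>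
        div_nonneg (add_nonneg (he b) (hd b)) htpos.le
      have hαi : ∑ b, q b • G.α b = G.α i := by
        have h2 := congrArg (fun v => (t⁻¹ : ℝ) • v) hcomb
        simp only [Finset.smul_sum, smul_smul, inv_mul_cancel₀ (ne_of_gt htpos),
          one_smul] at h2
        rw [← h2]
        apply Finset.sum_congr rfl
        intro b _
        simp only [hq]
        rw [div_eq_inv_mul]
      have hone : (1:ℝ) = ∑ b, q b * G.bil (G.α i) (G.α b) := by
        have := congrArg (fun v => G.bil (G.α i) v) hαi
        simp only [map_sum, map_smul, smul_eq_mul] at this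
        rw [this, G.norm_one]
      have hbnd : ∑ b, q b * G.bil (G.α i) (G.α b) ≤ q i := by
        calc ∑ b, q b * G.bil (G.α i) (G.α b)
            ≤ ∑ b, (if b = i then q b * G.bil (G.α i) (G.α b) else 0) := by
              apply Finset.sum_le_sum
              intro b _
              by_cases hbi : b = i
              · simp [hbi]
              · simp only [if_neg hbi]
                exact mul_nonpos_of_nonneg_of_nonpos (hqnn b)
                  (G.bil_alpha_nonpos (fun hh => hbi hh.symm))
          _ = q i * G.bil (G.α i) (G.α i) := by rw [Finset.sum_ite_eq']; simp
          _ = q i := by rw [G.norm_one, mul_one]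
      have hqi : 1 ≤ q i := le_trans (le_of_eq hone) hbnd
      have hzero : ∑ b, (q b - if b = i then 1 else 0) • G.α b = 0 := by
        simp only [sub_smul, Finset.sum_sub_distrib, hαi]
        have : ∑ b, (if b = i then (1:ℝ) else 0) • G.α b = G.α i := by
          have : ∀ b : B, (if b = i then (1:ℝ) else 0) • G.α b
              = (if b = i then G.α b else 0) := by
            intro b; by_cases hbi : b = i <;> simp [hbi]
          rw [Finset.sum_congr rfl (fun b _ => this b), Finset.sum_ite_eq']
          simp
        rw [this, sub_self]
      have hq0 := G.pos_indep _ (fun b => by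
        by_cases hbi : b = i
        · rw [if_pos hbi, hbi]; linarith
        · rw [if_neg hbi, sub_zero]; exact hqnn b) hzero
      -- all q b = 0 for b ≠ i, and q i = 1; hence β = e i • α i
      have heb : ∀ b, b ≠ i → e b = 0 := by
        intro b hbi
        have h1 : q b = 0 := by simpa [hbi] using hq0 b
        have h2 : e b + d b = 0 := by
          rcases div_eq_zero_iff.1 (by simpa [hq] using h1) with h' | h'
          · exact h'
          · exact absurd h' (ne_of_gt htpos)
        have := he b; have := hd b
        linarith
      have hβeq : β = e i • G.α i := by
        rw [← hesum]
        rw [Finset.sum_eq_single i]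
        · intro b _ hbi; rw [heb b hbi, zero_smul]
        · intro hiu; exact absurd (Finset.mem_univ i) hiu
      have hbil : G.bil β β = e i * e i := by
        rw [hβeq]
        simp only [map_smul, smul_eq_mul, LinearMap.smul_apply]
        rw [G.norm_one]; ring
      rw [G.bil_root_self hβ.1] at hbil
      have hei : e i = 1 := by nlinarith [he i]
      rw [hei, one_smul] at hβeq
      exact hne hβeq
    · -- t ≤ 0 : contradiction from positive independence
      push_neg at htpos
      have hzero : ∑ b, ((e b + d b) + (if b = i then -t else 0)) • G.α b = 0 := by
        simp only [add_smul, Finset.sum_add_distrib, hcomb]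
        have : ∑ b, (if b = i then -t else 0) • G.α b = -t • G.α i := by
          have : ∀ b : B, (if b = i then -t else 0) • G.α b
              = (if b = i then -t • G.α b else 0) := by
            intro b; by_cases hbi : b = i <;> simp [hbi]
          rw [Finset.sum_congr rfl (fun b _ => this b), Finset.sum_ite_eq']
          simp
        rw [this]
        rw [hesum, hdsum]
        simp only [neg_smul]
        abel
      have hq0 := G.pos_indep _ (fun b => by
        have h3 : (0:ℝ) ≤ (if b = i then -t else 0) := by
          by_cases hbi : b = i
          · simp only [if_pos hbi]; linarith
          · simp [hbi]
        have := he b; have := hd b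
        linarith) hzero
      have heb : ∀ b, e b = 0 := by
        intro b
        have h1 := hq0 b
        have h2 : (0:ℝ) ≤ (if b = i then -t else 0) := by
          by_cases hbi : b = i
          · simp only [if_pos hbi]; linarith
          · simp [hbi]
        have := he b; have := hd b
        linarith
      have : β = 0 := by
        rw [← hesum]
        apply Finset.sum_eq_zero
        intro b _; rw [heb b, zero_smul]
      exact G.root_ne_zero hβ.1 this

theorem pair_cone_subset_PhiPos {a b : V} (ha : a ∈ coneOf (Set.range G.α))
    (hb : b ∈ coneOf (Set.range G.α)) : coneOf {a, b} ∩ G.Phi ⊆ G.PhiPos := by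
  rintro γ ⟨hc, hΦ⟩
  refine ⟨hΦ, coneOf_subset_coneOf ?_ hc⟩
  rintro x (rfl | rfl)
  · exact ha
  · exact hb

theorem PhiPos_isClosedSet : G.IsClosedSet G.PhiPos :=
  fun a ha b hb => G.pair_cone_subset_PhiPos ha.2 hb.2

/-- A nonempty finite subset of `Φ⁺` whose complement is closed contains a simple root. -/
theorem biclosed_contains_simple {C : Set V} (hCpos : C ⊆ G.PhiPos) (hfin : C.Finite)
    (hne : C.Nonempty) (hC : G.IsClosedSet C) (hC' : G.IsClosedSet (G.PhiPos \ C)) :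
    ∃ i, G.α i ∈ C := by
  classical
  set r : V → V → Prop := fun x y => x ≠ y ∧ y - x ∈ coneOf (Set.range G.α) with hr
  have htrans : ∀ a b c, r a b → r b c → r a c := by
    rintro a b c ⟨hab, h1⟩ ⟨hbc, h2⟩
    refine ⟨?_, ?_⟩
    · rintro rfl
      have h3 : -(b - a) ∈ coneOf (Set.range G.α) := by
        have : -(b - a) = a - b := by abel
        rw [this]; exact h2
      exact hab (sub_eq_zero.1 (G.cone_eq_zero h1 h3)).symm
    · have h4 := coneOf_add_mem h2 h1
      have : c - b + (b - a) = c - a := by abel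
      rwa [this] at h4
  have hirr : ∀ a, ¬ r a a := fun a h => h.1 rfl
  obtain ⟨β, hβC, hmin⟩ := exists_min_rel r htrans hirr hfin hne
  have hβpos := hCpos hβC
  obtain ⟨e, he, hesum⟩ := G.mem_coneRange_iff.1 hβpos.2
  have h2 : ∑ b, e b * G.bil β (G.α b) = 1 := by
    have := congrArg (fun v => G.bil β v) hesum
    simp only [map_sum, map_smul, smul_eq_mul] at this
    rw [this, G.bil_root_self hβpos.1]
  have hex : ∃ b, 0 < e b * G.bil β (G.α b) := by
    by_contra hall
    push_neg at hall
    have : ∑ b, e b * G.bil β (G.α b) ≤ 0 := Finset.sum_nonpos (fun b _ => hall b)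
    linarith
  obtain ⟨i, hi⟩ := hex
  have hbilpos : 0 < G.bil (G.α i) β := by
    rw [G.bil_symm]
    rcases lt_or_ge 0 (G.bil β (G.α i)) with h | h
    · exact h
    · exfalso; nlinarith [he i]
  by_cases hβi : β = G.α i
  · exact ⟨i, hβi ▸ hβC⟩
  · set t : ℝ := 2 * G.bil (G.α i) β with ht
    have htpos : 0 < t := by rw [ht]; linarith
    set δ : V := G.π (cs.simple i) β with hδdef
    have hδpos : δ ∈ G.PhiPos := G.simple_perm_PhiPos i hβpos hβi
    have hβdecomp : β = t • G.α i + (1:ℝ) • δ := by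
      rw [hδdef, G.simple_refl, one_smul, ← ht]; abel
    have hβpair : β ∈ coneOf {G.α i, δ} ∩ G.Phi := by
      refine ⟨?_, hβpos.1⟩
      rw [hβdecomp]
      exact mem_coneOf_pair' htpos.le zero_le_one
    by_cases hαC : G.α i ∈ C
    · exact ⟨i, hαC⟩
    · by_cases hδC : δ ∈ C
      · exfalso
        apply hmin δ hδC
        refine ⟨?_, ?_⟩
        · intro hδβ
          have h5 : (0:V) + β = t • G.α i + β := by
            rw [zero_add]
            conv_lhs => rw [hβdecomp, one_smul, hδβ]
          have h6 : (0:V) = t • G.α i := add_right_cancel h5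
          rcases smul_eq_zero.1 h6.symm with h' | h'
          · exact (ne_of_gt htpos) h'
          · exact G.root_ne_zero (G.alpha_mem_Phi i) h'
        · have : β - δ = t • G.α i := by rw [hβdecomp, one_smul]; abel
          rw [this]
          exact coneOf_smul_mem htpos.le (mem_coneOf_self (Set.mem_range_self i))
      · exfalso
        have hmem : β ∈ G.PhiPos \ C :=
          hC' (G.α i) ⟨G.alpha_mem_PhiPos i, hαC⟩ δ ⟨hδpos, hδC⟩ hβpair
        exact hmem.2 hβC

theorem separable_aux (n : ℕ) : ∀ C : Set V, C ⊆ G.PhiPos → C.Finite → C.ncard = n →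
    G.IsClosedSet C → G.IsClosedSet (G.PhiPos \ C) →
    coneOf C ∩ coneOf (G.PhiPos \ C) ⊆ {0} := by
  classical
  induction n using Nat.strong_induction_on with
  | _ n ih =>
    intro C hCpos hfin hcard hC hC'
    by_cases hne : C.Nonempty
    case neg =>
      rw [Set.not_nonempty_iff_eq_empty] at hne
      rintro v ⟨hv1, hv2⟩
      exact coneOf_empty_subset (hne ▸ hv1)
    case pos =>
    obtain ⟨i, hαC⟩ := G.biclosed_contains_simple hCpos hfin hne hC hC'
    set σ : V → V := fun v => G.π (cs.simple i) v with hσ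
    have hσσ : ∀ v, σ (σ v) = v := fun v => G.pi_simple_sq i v
    have hσinj : Function.Injective σ := by
      intro a b hab
      have := congrArg σ hab; rwa [hσσ, hσσ] at this
    have hσneg : σ (G.α i) = -G.α i := G.pi_simple_self i
    have hσimg : ∀ X : Set V, ∀ v ∈ coneOf X, σ v ∈ coneOf (σ '' X) := by
      intro X v hv
      have := coneOf_image_mem_equiv (G.π (cs.simple i)) hv
      simpa [hσ] using this
    have hstab : ∀ β ∈ G.PhiPos, β ≠ G.α i → σ β ∈ G.PhiPos :=
      fun β h1 h2 => G.simple_perm_PhiPos i h1 h2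
    have hσne : ∀ β ∈ G.PhiPos, β ≠ G.α i → σ β ≠ G.α i := by
      intro β h1 h2 h3
      have h4 : β = -G.α i := by
        have := congrArg σ h3; rw [hσσ, hσneg] at this; exact this
      apply G.neg_alpha_not_mem_cone i
      rw [← h4]; exact h1.2
    have hσlin : ∀ (x y : ℝ) (u v : V), σ (x • u + y • v) = x • σ u + y • σ v := by
      intro x y u v; simp only [hσ, map_add, map_smul]
    set C' : Set V := σ '' (C \ {G.α i}) with hC'def
    have hC'pos : C' ⊆ G.PhiPos := by
      rintro _ ⟨β, ⟨hβC, hβne⟩, rfl⟩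
      exact hstab β (hCpos hβC) (by simpa using hβne)
    have hαnotC' : G.α i ∉ C' := by
      rintro ⟨β, ⟨hβC, hβne⟩, hβeq⟩
      have h4 : β = -G.α i := by
        have := congrArg σ hβeq; rw [hσσ, hσneg] at this; exact this
      apply G.neg_alpha_not_mem_cone i
      rw [← h4]; exact (hCpos hβC).2
    have hσβne : ∀ β, β ∉ C → σ β ∉ C' := by
      rintro β h2 ⟨β', hβ', heq⟩
      exact h2 (hσinj heq ▸ hβ'.1)
    have hfin' : C'.Finite := (hfin.diff (t := {G.α i})).image σ
    have hcard' : C'.ncard < n := by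
      rw [hC'def, Set.ncard_image_of_injective _ hσinj]
      have h1 : (C \ {G.α i}).ncard = C.ncard - 1 :=
        Set.ncard_diff_singleton_of_mem hαC
      have h2 : 0 < C.ncard := (Set.ncard_pos hfin).2 hne
      omega
    -- complement identity
    have hcomp : G.PhiPos \ C' = insert (G.α i) (σ '' (G.PhiPos \ C)) := by
      ext γ
      constructor
      · rintro ⟨hγpos, hγC'⟩
        by_cases hγα : γ = G.α i
        · exact Set.mem_insert_iff.2 (Or.inl hγα)
        · refine Set.mem_insert_iff.2 (Or.inr ⟨σ γ, ⟨hstab γ hγpos hγα, ?_⟩, hσσ γ⟩)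
          intro hσγC
          apply hγC'
          exact ⟨σ γ, ⟨hσγC, by simpa using hσne γ hγpos hγα⟩, hσσ γ⟩
      · intro hγ
        rcases Set.mem_insert_iff.1 hγ with rfl | ⟨β, hβ, rfl⟩
        · exact ⟨G.alpha_mem_PhiPos i, hαnotC'⟩
        · have hβα : β ≠ G.α i := by rintro rfl; exact hβ.2 hαC
          exact ⟨hstab β hβ.1 hβα, hσβne β hβ.2⟩
    -- C' is closed
    have hC'closed : G.IsClosedSet C' := by
      rintro _ ⟨β, hβ, rfl⟩ _ ⟨δ, hδ, rfl⟩ γ ⟨hγpair, hγΦ⟩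
      have hβpos := hCpos hβ.1
      have hβα : β ≠ G.α i := by simpa using hβ.2
      have hδpos := hCpos hδ.1
      have hδα : δ ≠ G.α i := by simpa using hδ.2
      obtain ⟨x, y, hx, hy, hγeq⟩ := mem_coneOf_pair hγpair
      have hγpos : γ ∈ G.PhiPos :=
        G.pair_cone_subset_PhiPos (hstab β hβpos hβα).2 (hstab δ hδpos hδα).2 ⟨hγpair, hγΦ⟩
      have hσγeq : σ γ = x • β + y • δ := by rw [hγeq, hσlin, hσσ, hσσ]
      by_cases hγα : γ = G.α i
      · exfalso
        apply G.neg_alpha_not_mem_cone i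
        have h5 : σ γ ∈ coneOf (Set.range G.α) := by
          rw [hσγeq]
          exact coneOf_add_mem (coneOf_smul_mem hx hβpos.2) (coneOf_smul_mem hy hδpos.2)
        rw [hγα, hσneg] at h5
        exact h5
      · have hσγpos : σ γ ∈ G.PhiPos := hstab γ hγpos hγα
        have hσγC : σ γ ∈ C := hC β hβ.1 δ hδ.1
          ⟨by rw [hσγeq]; exact mem_coneOf_pair' hx hy, hσγpos.1⟩
        exact ⟨σ γ, ⟨hσγC, by simpa using hσne γ hγpos hγα⟩, hσσ γ⟩
    -- Φ⁺ \ C' is closed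
    have hC''closed : G.IsClosedSet (G.PhiPos \ C') := by
      rw [hcomp]
      have hmixed : ∀ β ∈ G.PhiPos \ C, ∀ γ, γ ∈ G.PhiPos → γ ≠ G.α i →
          ∀ x y : ℝ, 0 ≤ x → 0 ≤ y → γ = x • G.α i + y • σ β →
          γ ∈ insert (G.α i) (σ '' (G.PhiPos \ C)) := by
        intro β hβ γ hγpos hγα x y hx hy hγeq
        have hβα : β ≠ G.α i := by rintro rfl; exact hβ.2 hαC
        have hσγ : σ γ = y • β - x • G.α i := by
          rw [hγeq, hσlin, hσneg, hσσ, smul_neg]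
          abel
        have hσγpos : σ γ ∈ G.PhiPos := hstab γ hγpos hγα
        by_cases hy0 : y = 0
        · exfalso
          have h1 : σ γ ∈ coneOf (Set.range G.α) := hσγpos.2
          have h2 : -(σ γ) ∈ coneOf (Set.range G.α) := by
            rw [hσγ, hy0, zero_smul, zero_sub, neg_neg]
            exact coneOf_smul_mem hx (mem_coneOf_self (Set.mem_range_self i))
          exact G.root_ne_zero hσγpos.1 (G.cone_eq_zero h1 h2)
        · have hypos : 0 < y := lt_of_le_of_ne hy (Ne.symm hy0)
          have hβdecomp : β = (y⁻¹) • σ γ + (x/y) • G.α i := by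
            rw [hσγ, smul_sub, smul_smul, inv_mul_cancel₀ hy0, one_smul, smul_smul]
            have h6 : y⁻¹ * x = x / y := by field_simp
            rw [h6]
            abel
          have hσγnotC : σ γ ∉ C := by
            intro hσγC
            apply hβ.2
            apply hC (σ γ) hσγC (G.α i) hαC
            refine ⟨?_, hβ.1.1⟩
            rw [hβdecomp]
            exact mem_coneOf_pair' (by positivity) (by positivity)
          exact Set.mem_insert_iff.2 (Or.inr ⟨σ γ, ⟨hσγpos, hσγnotC⟩, hσσ γ⟩)
      rintro a ha b hb γ ⟨hγpair, hγΦ⟩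
      have hapos : a ∈ G.PhiPos := by
        rcases Set.mem_insert_iff.1 ha with rfl | ⟨β, hβ, rfl⟩
        · exact G.alpha_mem_PhiPos i
        · exact hstab β hβ.1 (by rintro rfl; exact hβ.2 hαC)
      have hbpos : b ∈ G.PhiPos := by
        rcases Set.mem_insert_iff.1 hb with rfl | ⟨β, hβ, rfl⟩
        · exact G.alpha_mem_PhiPos i
        · exact hstab β hβ.1 (by rintro rfl; exact hβ.2 hαC)
      have hγpos : γ ∈ G.PhiPos :=
        G.pair_cone_subset_PhiPos hapos.2 hbpos.2 ⟨hγpair, hγΦ⟩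
      by_cases hγα : γ = G.α i
      · exact Set.mem_insert_iff.2 (Or.inl hγα)
      · obtain ⟨x, y, hx, hy, hγeq⟩ := mem_coneOf_pair hγpair
        rcases Set.mem_insert_iff.1 ha with rfl | ⟨β, hβ, rfl⟩
        · rcases Set.mem_insert_iff.1 hb with rfl | ⟨δ, hδ, rfl⟩
          · exfalso
            have hγeq2 : γ = (x + y) • G.α i := by rw [hγeq, add_smul]
            have hbil : G.bil γ γ = (x+y)*(x+y) := by
              rw [hγeq2]
              simp only [map_smul, smul_eq_mul, LinearMap.smul_apply]
              rw [G.norm_one]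
              ring
            rw [G.bil_root_self hγpos.1] at hbil
            have hxy : x + y = 1 := by nlinarith
            exact hγα (by rw [hγeq2, hxy, one_smul])
          · exact hmixed δ hδ γ hγpos hγα x y hx hy hγeq
        · rcases Set.mem_insert_iff.1 hb with rfl | ⟨δ, hδ, rfl⟩
          · exact hmixed β hβ γ hγpos hγα y x hy hx (by rw [hγeq]; abel)
          · have hσγeq : σ γ = x • β + y • δ := by rw [hγeq, hσlin, hσσ, hσσ]
            have hσγpos : σ γ ∈ G.PhiPos := hstab γ hγpos hγα
            have hσγmem : σ γ ∈ G.PhiPos \ C := hC' β hβ δ hδ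
              ⟨by rw [hσγeq]; exact mem_coneOf_pair' hx hy, hσγpos.1⟩
            exact Set.mem_insert_iff.2 (Or.inr ⟨σ γ, hσγmem, hσσ γ⟩)
    -- apply the induction hypothesis
    have hsep' := ih C'.ncard hcard' C' hC'pos hfin' rfl hC'closed hC''closed
    rintro v ⟨hv1, hv2⟩
    have hCins : C = insert (G.α i) (C \ {G.α i}) := by
      rw [Set.insert_diff_singleton, Set.insert_eq_self.2 hαC]
    rw [hCins] at hv1
    obtain ⟨t, y, htnn, hy, hveq⟩ := mem_coneOf_insert hv1
    have hσy : σ y ∈ coneOf C' := hσimg _ y hy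
    have hσv : σ v ∈ coneOf (G.PhiPos \ C') := by
      apply coneOf_mono _ (hσimg _ v hv2)
      rw [hcomp]
      exact Set.subset_insert _ _
    have hαpos' : G.α i ∈ G.PhiPos \ C' := ⟨G.alpha_mem_PhiPos i, hαnotC'⟩
    have hkey : σ v + t • G.α i ∈ coneOf C' ∩ coneOf (G.PhiPos \ C') := by
      constructor
      · have h7 : σ v + t • G.α i = σ y := by
          have h8 : σ v = t • (-G.α i) + σ y := by
            rw [hveq]
            simp only [hσ, map_add, map_smul, G.pi_simple_self]
          rw [h8, smul_neg]
          abel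
        rw [h7]; exact hσy
      · exact coneOf_add_mem hσv (coneOf_smul_mem htnn (mem_coneOf_self hαpos'))
    have hzero : σ v + t • G.α i = 0 := hsep' hkey
    have hveq2 : v = t • G.α i := by
      have h9 : σ v = -(t • G.α i) := eq_neg_of_add_eq_zero_left hzero
      have h10 := congrArg σ h9
      rw [hσσ] at h10
      rw [h10]
      simp only [hσ, map_neg, map_smul, G.pi_simple_self, smul_neg, neg_neg]
    by_cases ht0 : t = 0
    · rw [hveq2, ht0, zero_smul]
      exact Set.mem_singleton 0
    · exfalso
      have htpos : 0 < t := lt_of_le_of_ne htnn (Ne.symm ht0)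
      have hαcone : G.α i ∈ coneOf (G.PhiPos \ C) := by
        have h11 := coneOf_smul_mem (le_of_lt (inv_pos.2 htpos)) hv2
        have h12 : (t⁻¹ : ℝ) • v = G.α i := by
          rw [hveq2, smul_smul, inv_mul_cancel₀ ht0, one_smul]
        rwa [h12] at h11
      apply G.neg_alpha_not_mem_cone i
      have h13 : σ (G.α i) ∈ coneOf (σ '' (G.PhiPos \ C)) := hσimg _ _ hαcone
      have h14 : σ '' (G.PhiPos \ C) ⊆ coneOf (Set.range G.α) := by
        rintro _ ⟨β, hβ, rfl⟩
        exact (hstab β hβ.1 (by rintro rfl; exact hβ.2 hαC)).2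
      have h15 := coneOf_subset_coneOf h14 h13
      rwa [hσneg] at h15


end GeomRep

/-- The right weak order on a Coxeter group. -/
def WeakLE {B : Type*} {W : Type*} [Group W] {M : CoxeterMatrix B}
    (cs : CoxeterSystem M W) (u w : W) : Prop :=
  cs.length u + cs.length (u⁻¹ * w) = cs.length w

/-- The 2-closure of `A`: the smallest closed subset of `Φ⁺` containing `A`. -/
def GeomRep.closure2 {B : Type*} [Fintype B] {W : Type*} [Group W]
    {M : CoxeterMatrix B} {cs : CoxeterSystem M W}
    {V : Type*} [AddCommGroup V] [Module ℝ V] (G : GeomRep M cs V) (A : Set V) : Set V :=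
  ⋂₀ {C : Set V | A ⊆ C ∧ C ⊆ G.PhiPos ∧ G.IsClosedSet C}

/-- If the 2-closure of `A ⊆ Φ⁺` is finite and biclosed, then it equals
`cone(A) ∩ Φ`. -/
theorem stmt13 {B : Type*} [Fintype B] {W : Type*} [Group W]
    {M : CoxeterMatrix B} {cs : CoxeterSystem M W}
    {V : Type*} [AddCommGroup V] [Module ℝ V] (G : GeomRep M cs V)
    (A : Set V) (hA : A ⊆ G.PhiPos)
    (hfin : (G.closure2 A).Finite) (hbc : G.IsBiclosed (G.closure2 A)) :
    G.closure2 A = coneOf A ∩ G.Phi := by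
  have hPhiPos_mem : G.PhiPos ∈ {C : Set V | A ⊆ C ∧ C ⊆ G.PhiPos ∧ G.IsClosedSet C} :=
    ⟨hA, subset_rfl, G.PhiPos_isClosedSet⟩
  have hCsub : G.closure2 A ⊆ G.PhiPos := Set.sInter_subset_of_mem hPhiPos_mem
  have hACl : A ⊆ G.closure2 A := Set.subset_sInter (fun C hC => hC.1)
  have hconeA_cone : coneOf A ⊆ coneOf (Set.range G.α) :=
    coneOf_subset_coneOf (fun a ha => (hA ha).2)
  have hmem2 : (coneOf A ∩ G.Phi) ∈ {C : Set V | A ⊆ C ∧ C ⊆ G.PhiPos ∧ G.IsClosedSet C} := by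
    refine ⟨fun a ha => ⟨mem_coneOf_self ha, (hA ha).1⟩, ?_, ?_⟩
    · rintro v ⟨hv1, hv2⟩
      exact ⟨hv2, hconeA_cone hv1⟩
    · rintro a ha b hb γ ⟨hγpair, hγΦ⟩
      refine ⟨?_, hγΦ⟩
      refine coneOf_subset_coneOf ?_ hγpair
      rintro x (rfl | rfl)
      · exact ha.1
      · exact hb.1
  apply Set.Subset.antisymm
  · exact Set.sInter_subset_of_mem hmem2
  · rintro γ ⟨hγcone, hγΦ⟩
    by_contra hγC
    have hγpos : γ ∈ G.PhiPos := ⟨hγΦ, hconeA_cone hγcone⟩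
    have hsep := G.separable_aux ((G.closure2 A).ncard) (G.closure2 A) hCsub hfin rfl
      hbc.1 hbc.2
    have h1 : γ ∈ coneOf (G.closure2 A) := coneOf_mono hACl hγcone
    have h2 : γ ∈ coneOf (G.PhiPos \ G.closure2 A) := mem_coneOf_self ⟨hγpos, hγC⟩
    have h3 := hsep ⟨h1, h2⟩
    exact G.root_ne_zero hγΦ (by simpa using h3)
end
end

section
/- Let ω = s₁s₂s₃⋯ be an infinite reduced word on S with prefixes w_i = s₁⋯s_i, and let N(ω) = ⋃_{i∈ℕ} N(w_i). Then N(ω) is separable: cone(N(ω)) ∩ cone(Φ⁺ \ N(ω)) = {0}. -/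
open Pointwise

noncomputable section

open List

namespace StmtAux

open scoped Classical

theorem conj_eq_iff {G : Type*} [Group G] (a b c t : G) :
    a * t * b = c ↔ t = a⁻¹ * c * b⁻¹ := by
  constructor
  · intro h; rw [← h]; group
  · intro h; rw [h]; group

variable {B : Type*} {W : Type*} [Group W] {M : CoxeterMatrix B} (cs : CoxeterSystem M W)

local prefix:100 "s" => cs.simple
local prefix:100 "π" => cs.wordProd
local prefix:100 "ℓ" => cs.length

/-- The underlying function of the sign representation of a simple generator. -/
noncomputable def xf (i : B) : W × ℤˣ → W × ℤˣ :=
  fun p => (s i * p.1 * s i, if p.1 = s i then -p.2 else p.2)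

theorem simple_conj_eq_simple_iff (i : B) (t : W) :
    s i * t * s i = s i ↔ t = s i := by
  rw [conj_eq_iff, cs.inv_simple, cs.simple_mul_simple_self, one_mul]

theorem xf_invol (i : B) : Function.Involutive (xf cs i) := by
  rintro ⟨t, ε⟩
  have h1 : s i * (s i * t * s i) * s i = t := by
    calc s i * (s i * t * s i) * s i = (s i * s i) * t * (s i * s i) := by group
    _ = t := by rw [cs.simple_mul_simple_self]; group
  show (s i * (s i * t * s i) * s i,
      if (s i * t * s i = s i) then -(if t = s i then -ε else ε) else (if t = s i then -ε else ε))
      = (t, ε)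
  rw [h1, Prod.mk.injEq]
  refine ⟨rfl, ?_⟩
  by_cases ht : t = s i
  · rw [if_pos ((simple_conj_eq_simple_iff cs i t).mpr ht), if_pos ht, neg_neg]
  · rw [if_neg (fun h => ht ((simple_conj_eq_simple_iff cs i t).mp h)), if_neg ht]

/-- The sign representation permutation attached to a simple generator. -/
noncomputable def xσ (i : B) : Equiv.Perm (W × ℤˣ) := (xf_invol cs i).toPerm

theorem xσ_apply (i : B) (t : W) (ε : ℤˣ) :
    xσ cs i (t, ε) = (s i * t * s i, if t = s i then -ε else ε) := rfl

theorem sj_mul_q_pow (i j : B) (k : ℕ) :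
    s j * (s i * s j) ^ k = ((s i * s j)⁻¹) ^ k * s j := by
  induction k with
  | zero => simp
  | succ k ih =>
    have hbase : s j * (s i * s j) = (s i * s j)⁻¹ * s j := by
      rw [mul_inv_rev, cs.inv_simple, cs.inv_simple]
      group
    rw [pow_succ, ← mul_assoc, ih, mul_assoc, hbase, pow_succ]
    group

theorem xσ_mul_pow_apply (i j : B) (k : ℕ) (t : W) (ε : ℤˣ) :
    ((xσ cs i * xσ cs j) ^ k) (t, ε) =
      ((s i * s j) ^ k * t * ((s i * s j)⁻¹) ^ k,
        ε * ∏ n ∈ Finset.range (2 * k),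
          (if t = ((s i * s j)⁻¹) ^ n * s j then (-1 : ℤˣ) else 1)) := by
  induction k with
  | zero => simp
  | succ k ih =>
    rw [pow_succ', Equiv.Perm.mul_apply, ih]
    set q := s i * s j with hq
    rw [Equiv.Perm.mul_apply, xσ_apply]
    have hqinv : q⁻¹ = s j * s i := by
      rw [hq, mul_inv_rev, cs.inv_simple, cs.inv_simple]
    have hA : s j * q ^ k = (q⁻¹) ^ k * s j := sj_mul_q_pow cs i j k
    have e1 : (q ^ k)⁻¹ = q⁻¹ ^ k := by rw [inv_pow]
    have e2 : (q⁻¹ ^ k)⁻¹ = q ^ k := by rw [inv_pow, inv_inv]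
    have hkey : q⁻¹ ^ k * s j * q ^ k = q⁻¹ ^ (2 * k) * s j := by
      rw [mul_assoc, hA, ← mul_assoc, ← pow_add, two_mul]
    have hc1 : (q ^ k * t * (q⁻¹) ^ k = s j) ↔ (t = (q⁻¹) ^ (2 * k) * s j) := by
      rw [conj_eq_iff, e1, e2, hkey]
    have hc2 : (s j * (q ^ k * t * (q⁻¹) ^ k) * s j = s i)
        ↔ (t = (q⁻¹) ^ (2 * k + 1) * s j) := by
      rw [conj_eq_iff, cs.inv_simple, conj_eq_iff, e1, e2]
      have h3 : s j * s i * s j = q⁻¹ * s j := by rw [hqinv]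
      have h4 : q⁻¹ ^ k * (q⁻¹ * s j) * q ^ k = q⁻¹ ^ (2 * k + 1) * s j := by
        rw [← mul_assoc, ← pow_succ, mul_assoc, hA, ← mul_assoc, ← pow_add]
        have : k + 1 + k = 2 * k + 1 := by ring
        rw [this]
      rw [h3, h4]
    rw [xσ_apply]
    have hfst : s i * (s j * (q ^ k * t * (q⁻¹) ^ k) * s j) * s i
        = q ^ (k + 1) * t * (q⁻¹) ^ (k + 1) := by
      rw [pow_succ', pow_succ, hq, hqinv]
      group
    rw [Prod.mk.injEq]
    constructor
    · exact hfst
    · have hsplit : 2 * (k + 1) = (2 * k) + 1 + 1 := by ring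
      rw [hsplit, Finset.prod_range_succ, Finset.prod_range_succ]
      rw [if_congr hc1 rfl rfl, if_congr hc2 rfl rfl]
      by_cases h1 : t = (q⁻¹) ^ (2 * k) * s j <;>
        by_cases h2 : t = (q⁻¹) ^ (2 * k + 1) * s j
      · rw [if_pos h1, if_pos h2, if_pos h1, if_pos h2]
        simp [mul_neg, mul_one, neg_neg]
      · rw [if_pos h1, if_neg h2, if_pos h1, if_neg h2]
        simp [mul_neg, mul_one, neg_neg]
      · rw [if_neg h1, if_pos h2, if_neg h1, if_pos h2]
        simp [mul_neg, mul_one, neg_neg]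
      · rw [if_neg h1, if_neg h2, if_neg h1, if_neg h2]
        simp [mul_neg, mul_one, neg_neg]

theorem xσ_liftable : M.IsLiftable (xσ cs) := by
  intro i j
  rcases Nat.eq_zero_or_pos (M i j) with hm | hm
  · rw [hm, pow_zero]
  · refine Equiv.ext ?_
    rintro ⟨t, ε⟩
    rw [xσ_mul_pow_apply]
    have hq : (s i * s j) ^ (M i j) = 1 := cs.simple_mul_simple_pow i j
    have hqi : ((s i * s j)⁻¹) ^ (M i j) = 1 := by
      rw [inv_pow, hq, inv_one]
    have hprod : (∏ n ∈ Finset.range (2 * M i j),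
        (if t = ((s i * s j)⁻¹) ^ n * s j then (-1 : ℤˣ) else 1)) = 1 := by
      rw [two_mul, Finset.prod_range_add]
      have heq : ∀ n, ((s i * s j)⁻¹) ^ (M i j + n) = ((s i * s j)⁻¹) ^ n := by
        intro n; rw [pow_add, hqi, one_mul]
      have : (∏ n ∈ Finset.range (M i j),
          (if t = ((s i * s j)⁻¹) ^ (M i j + n) * s j then (-1 : ℤˣ) else 1))
          = ∏ n ∈ Finset.range (M i j),
          (if t = ((s i * s j)⁻¹) ^ n * s j then (-1 : ℤˣ) else 1) := by
        apply Finset.prod_congr rfl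
        intro n _
        rw [heq n]
      rw [this, ← sq, Int.units_sq]
    rw [hq, hqi, hprod]
    simp

/-- The sign representation. -/
noncomputable def sgnHom : W →* Equiv.Perm (W × ℤˣ) := cs.lift ⟨xσ cs, xσ_liftable cs⟩

theorem sgnHom_simple (i : B) : sgnHom cs (s i) = xσ cs i :=
  cs.lift_apply_simple (xσ_liftable cs) i

/-- Sign of a list of reflections relative to t. -/
noncomputable def signProd (L : List W) (t : W) : ℤˣ :=
  (L.map (fun x => if t = x then (-1 : ℤˣ) else 1)).prod

theorem signProd_nil (t : W) : signProd ([] : List W) t = 1 := rfl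

theorem signProd_cons (x : W) (L : List W) (t : W) :
    signProd (x :: L) t = (if t = x then (-1 : ℤˣ) else 1) * signProd L t := by
  simp [signProd]

theorem signProd_eq_one_of_not_mem {L : List W} {t : W} (h : t ∉ L) : signProd L t = 1 := by
  induction L with
  | nil => rfl
  | cons x L ih =>
    rw [signProd_cons, if_neg (fun hx => h (by rw [hx]; exact mem_cons_self)),
      ih (fun hm => h (mem_cons_of_mem x hm)), one_mul]

theorem mem_of_signProd_ne_one {L : List W} {t : W} (h : signProd L t ≠ 1) : t ∈ L := by
  by_contra hm
  exact h (signProd_eq_one_of_not_mem hm)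

theorem sgnHom_wordProd (l : List B) (t : W) (ε : ℤˣ) :
    sgnHom cs (π l) (t, ε) = (π l * t * (π l)⁻¹, ε * signProd (cs.rightInvSeq l) t) := by
  induction l with
  | nil => simp [signProd_nil]
  | cons i l ih =>
    rw [cs.wordProd_cons, map_mul, Equiv.Perm.mul_apply, ih, sgnHom_simple, xσ_apply]
    have hris : cs.rightInvSeq (i :: l) = ((π l)⁻¹ * s i * (π l)) :: cs.rightInvSeq l := rfl
    rw [hris, signProd_cons]
    have hcond : (π l * t * (π l)⁻¹ = s i) ↔ (t = (π l)⁻¹ * s i * (π l)) := by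
      rw [conj_eq_iff, inv_inv]
    rw [Prod.mk.injEq]
    constructor
    · rw [mul_inv_rev, cs.inv_simple]; group
    · rw [if_congr hcond rfl rfl]
      by_cases h : t = (π l)⁻¹ * s i * (π l) <;>
        simp [h, mul_assoc, mul_comm, mul_left_comm]

theorem signProd_eq_of_wordProd_eq {l l' : List B} (h : π l = π l') (t : W) :
    signProd (cs.rightInvSeq l) t = signProd (cs.rightInvSeq l') t := by
  have h1 := sgnHom_wordProd cs l t 1
  have h2 := sgnHom_wordProd cs l' t 1
  rw [h] at h1
  rw [h1] at h2
  have := congrArg Prod.snd h2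
  simpa using this

/-- Exchange property for simple reflections, for an arbitrary word. -/
theorem exchange_simple (l : List B) (i : B)
    (h : ℓ (π l * s i) < ℓ (π l)) :
    ∃ j < l.length, π (l.eraseIdx j) = π l * s i := by
  classical
  set w := π l with hw
  set u := w * s i with hu
  have hui : u * s i = w := by
    rw [hu, mul_assoc, cs.simple_mul_simple_self, mul_one]
  obtain ⟨l', hl'red, hl'⟩ := cs.exists_reduced_word' u
  have hlu : ℓ u + 1 = ℓ w := by
    rcases cs.length_mul_simple w i with h1 | h1 <;> rw [← hu] at h1 <;> omega
  set l'' := l'.concat i with hl''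
  have hl''prod : π l'' = w := by
    rw [hl'', cs.wordProd_concat, ← hl', hui]
  have hl''red : cs.IsReduced l'' := by
    unfold CoxeterSystem.IsReduced
    rw [hl''prod, length_concat, ← hl'red, ← hl']
    omega
  -- s i appears exactly once in ris l''
  have hris : cs.rightInvSeq l'' = ((cs.rightInvSeq l').map (MulAut.conj (s i))).concat (s i) :=
    cs.rightInvSeq_concat l' i
  have hnodup : (cs.rightInvSeq l'').Nodup := hl''red.nodup_rightInvSeq
  have hnotmem : s i ∉ (cs.rightInvSeq l').map (MulAut.conj (s i)) := by
    rw [hris] at hnodup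
    rw [concat_eq_append] at hnodup
    rw [List.nodup_append] at hnodup
    intro hmem
    exact hnodup.2.2 _ hmem _ (List.mem_singleton_self _) rfl
  have hsign'' : signProd (cs.rightInvSeq l'') (s i) = -1 := by
    rw [hris, concat_eq_append]
    unfold signProd
    rw [List.map_append, List.prod_append]
    rw [show ((([s i]).map (fun x => if s i = x then (-1 : ℤˣ) else 1)).prod) = -1 by simp]
    have : signProd ((cs.rightInvSeq l').map (MulAut.conj (s i))) (s i) = 1 :=
      signProd_eq_one_of_not_mem hnotmem
    unfold signProd at this
    rw [this, one_mul]
  have hsign : signProd (cs.rightInvSeq l) (s i) = -1 := by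
    rw [signProd_eq_of_wordProd_eq cs (show π l = π l'' by rw [hl''prod]) (s i), hsign'']
  have hmem : s i ∈ cs.rightInvSeq l := by
    apply mem_of_signProd_ne_one
    rw [hsign]
    decide
  obtain ⟨j, hj, hget⟩ := List.mem_iff_getElem.mp hmem
  rw [cs.length_rightInvSeq] at hj
  refine ⟨j, hj, ?_⟩
  have hgetD : (cs.rightInvSeq l).getD j 1 = s i := by
    rw [List.getD_eq_getElem?_getD]
    rw [List.getElem?_eq_getElem (by rw [cs.length_rightInvSeq]; exact hj)]
    simpa using hget
  rw [← cs.wordProd_mul_getD_rightInvSeq l j, hgetD]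

/-- Deletion step: a non-reduced word can be shortened by two letters. -/
theorem deletion_step (l : List B) (hnr : ¬ cs.IsReduced l) :
    ∃ l₂ : List B, l₂.length + 2 = l.length ∧ π l₂ = π l ∧ ∀ b ∈ l₂, b ∈ l := by
  classical
  have hex : ∃ k, ¬ cs.IsReduced (l.take k) := by
    refine ⟨l.length, ?_⟩
    rw [List.take_length]
    exact hnr
  set k0 := Nat.find hex with hk0
  have hk0spec : ¬ cs.IsReduced (l.take k0) := Nat.find_spec hex
  have hk0pos : 0 < k0 := by
    rcases Nat.eq_zero_or_pos k0 with h | h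
    · exfalso
      apply hk0spec
      rw [h]
      simp [CoxeterSystem.IsReduced]
    · exact h
  have hk0le : k0 ≤ l.length := Nat.find_min' hex (by rw [List.take_length]; exact hnr)
  set k := k0 - 1 with hk
  have hkk : k + 1 = k0 := by omega
  have hkred : cs.IsReduced (l.take k) := by
    by_contra hcon
    exact absurd (Nat.find_min hex (show k < k0 by omega)) (fun h => h hcon)
  have hklt : k < l.length := by omega
  have htake : l.take (k + 1) = l.take k ++ [l[k]] := by
    rw [List.take_succ]
    rw [List.getElem?_eq_getElem hklt]
    rfl
  have hprod1 : π (l.take (k + 1)) = π (l.take k) * s (l[k]) := by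
    rw [htake, cs.wordProd_append, cs.wordProd_singleton]
  have hlen_take_k : (l.take k).length = k := by
    rw [List.length_take]
    omega
  have hlt : ℓ (π (l.take k) * s (l[k])) < ℓ (π (l.take k)) := by
    have hle : ℓ (π (l.take (k+1))) ≤ k + 1 := by
      have := cs.length_wordProd_le (l.take (k+1))
      rw [List.length_take] at this
      omega
    have hne : ℓ (π (l.take (k+1))) ≠ k + 1 := by
      intro hcon
      apply hk0spec
      rw [← hkk]
      unfold CoxeterSystem.IsReduced
      rw [hcon, List.length_take]
      omega
    have hredk : ℓ (π (l.take k)) = k := by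
      have := hkred
      unfold CoxeterSystem.IsReduced at this
      rw [hlen_take_k] at this
      exact this
    rw [← hprod1, hredk]
    rcases cs.length_mul_simple (π (l.take k)) (l[k]) with h1 | h1
    · rw [← hprod1] at h1
      rw [hredk] at h1
      omega
    · rw [← hprod1, hredk] at h1
      omega
  obtain ⟨j, hjlt, hjer⟩ := exchange_simple cs (l.take k) (l[k]) hlt
  refine ⟨(l.take k).eraseIdx j ++ l.drop (k + 1), ?_, ?_, ?_⟩
  · rw [List.length_append, List.length_eraseIdx]
    rw [if_pos (by rw [hlen_take_k]; exact (by rw [hlen_take_k] at hjlt; exact hjlt))]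
    rw [hlen_take_k, List.length_drop]
    omega
  · rw [cs.wordProd_append, hjer, ← hprod1, ← cs.wordProd_append, List.take_append_drop]
  · intro b hb
    rcases List.mem_append.mp hb with h | h
    · exact (List.take_sublist k l).mem ((List.eraseIdx_sublist (l.take k) j).mem h)
    · exact (List.drop_sublist (k+1) l).mem h

/-- Every word has a reduced subword (same product, letters from the original word). -/
theorem exists_reduced_subword (l : List B) :
    ∃ l' : List B, cs.IsReduced l' ∧ π l' = π l ∧ ∀ b ∈ l', b ∈ l := by
  classical
  generalize hn : l.length = n
  induction n using Nat.strong_induction_on generalizing l with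
  | _ n ih =>
    by_cases hred : cs.IsReduced l
    · exact ⟨l, hred, rfl, fun b hb => hb⟩
    · obtain ⟨l₂, hlen, hprod, hmem⟩ := deletion_step cs l hred
      obtain ⟨l', h1, h2, h3⟩ := ih l₂.length (by omega) l₂ rfl
      exact ⟨l', h1, by rw [h2, hprod], fun b hb => hmem b (h3 b hb)⟩

end StmtAux

namespace StmtAux

section ConeGeom

variable {B : Type*} [Fintype B] {W : Type*} [Group W]
  {M : CoxeterMatrix B} {cs : CoxeterSystem M W}
  {V : Type*} [AddCommGroup V] [Module ℝ V]

theorem zero_mem_coneOf (X : Set V) : 0 ∈ coneOf X :=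
  ⟨0, fun i => i.elim0, fun i => i.elim0, fun i => i.elim0, fun i => i.elim0, by simp⟩

theorem mem_coneOf_of_mem {X : Set V} {x : V} (h : x ∈ X) : x ∈ coneOf X :=
  ⟨1, fun _ => 1, fun _ => x, fun _ => zero_le_one, fun _ => h, by simp⟩

theorem coneOf_mono {X Y : Set V} (h : X ⊆ Y) : coneOf X ⊆ coneOf Y := by
  rintro v ⟨n, c, f, hc, hf, hsum⟩
  exact ⟨n, c, f, hc, fun i => h (hf i), hsum⟩

theorem smul_mem_coneOf {X : Set V} {x : V} {r : ℝ} (hr : 0 ≤ r) (h : x ∈ coneOf X) :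
    r • x ∈ coneOf X := by
  obtain ⟨n, c, f, hc, hf, hsum⟩ := h
  refine ⟨n, fun i => r * c i, f, fun i => mul_nonneg hr (hc i), hf, ?_⟩
  rw [← hsum, Finset.smul_sum]
  apply Finset.sum_congr rfl
  intro i _
  rw [smul_smul]

theorem add_mem_coneOf {X : Set V} {x y : V} (hx : x ∈ coneOf X) (hy : y ∈ coneOf X) :
    x + y ∈ coneOf X := by
  obtain ⟨n, c, f, hc, hf, hsum⟩ := hx
  obtain ⟨m, d, g, hd, hg, hsum'⟩ := hy
  refine ⟨n + m, Fin.addCases c d, Fin.addCases f g, ?_, ?_, ?_⟩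
  · intro i
    induction i using Fin.addCases with
    | left i => simp only [Fin.addCases_left]; exact hc i
    | right i => simp only [Fin.addCases_right]; exact hd i
  · intro i
    induction i using Fin.addCases with
    | left i => simp only [Fin.addCases_left]; exact hf i
    | right i => simp only [Fin.addCases_right]; exact hg i
  · rw [Fin.sum_univ_add]
    rw [← hsum, ← hsum']
    congr 1
    · apply Finset.sum_congr rfl
      intro i _
      simp only [Fin.addCases_left]
    · apply Finset.sum_congr rfl
      intro i _
      simp only [Fin.addCases_right]

theorem sum_smul_mem_coneOf {X : Set V} {ι : Type*} (t : Finset ι) (c : ι → ℝ) (x : ι → V)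
    (hc : ∀ i ∈ t, 0 ≤ c i) (hx : ∀ i ∈ t, x i ∈ coneOf X) :
    ∑ i ∈ t, c i • x i ∈ coneOf X := by
  apply Finset.sum_induction _ (· ∈ coneOf X)
  · exact fun a b ha hb => add_mem_coneOf ha hb
  · exact zero_mem_coneOf X
  · exact fun i hi => smul_mem_coneOf (hc i hi) (hx i hi)

theorem linearEquiv_mem_coneOf {X : Set V} {x : V} (T : V ≃ₗ[ℝ] V) (h : x ∈ coneOf X) :
    T x ∈ coneOf (T '' X) := by
  obtain ⟨n, c, f, hc, hf, hsum⟩ := h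
  refine ⟨n, c, fun i => T (f i), hc, fun i => ⟨f i, hf i, rfl⟩, ?_⟩
  rw [← hsum, map_sum]
  apply Finset.sum_congr rfl
  intro i _
  rw [map_smul]

open Classical in
theorem mem_coneOf_range_iff {α : B → V} {x : V} :
    x ∈ coneOf (Set.range α) ↔ ∃ c : B → ℝ, (∀ b, 0 ≤ c b) ∧ ∑ b, c b • α b = x := by
  constructor
  · rintro ⟨n, c, f, hc, hf, hsum⟩
    choose g hg using hf
    refine ⟨fun b => ∑ i ∈ Finset.univ.filter (fun i => g i = b), c i,
      fun b => Finset.sum_nonneg (fun i _ => hc i), ?_⟩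
    rw [← hsum]
    rw [← Finset.sum_fiberwise Finset.univ g (fun i => c i • f i)]
    apply Finset.sum_congr rfl
    intro b _
    rw [Finset.sum_smul]
    apply Finset.sum_congr rfl
    intro i hi
    rw [Finset.mem_filter] at hi
    rw [← hi.2, hg i]
  · rintro ⟨c, hc, hsum⟩
    set e := (Fintype.equivFin B).symm with he
    refine ⟨Fintype.card B, fun i => c (e i), fun i => α (e i),
      fun i => hc _, fun i => ⟨e i, rfl⟩, ?_⟩
    rw [← hsum]
    exact Equiv.sum_comp e (fun b => c b • α b)

variable (G : GeomRep M cs V)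

theorem cone_inter_neg_eq_zero {x : V} (hx : x ∈ coneOf (Set.range G.α))
    (hnx : -x ∈ coneOf (Set.range G.α)) : x = 0 := by
  obtain ⟨c, hc, hcs⟩ := mem_coneOf_range_iff.mp hx
  obtain ⟨d, hd, hds⟩ := mem_coneOf_range_iff.mp hnx
  have hsum : ∑ b, (c b + d b) • G.α b = 0 := by
    have : ∑ b, (c b + d b) • G.α b = (∑ b, c b • G.α b) + ∑ b, d b • G.α b := by
      rw [← Finset.sum_add_distrib]
      apply Finset.sum_congr rfl
      intro b _
      rw [add_smul]
    rw [this, hcs, hds, add_neg_cancel]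
  have hz := G.pos_indep _ (fun b => add_nonneg (hc b) (hd b)) hsum
  have hcz : ∀ b, c b = 0 := by
    intro b
    have := hz b
    have h1 := hc b
    have h2 := hd b
    linarith
  rw [← hcs]
  apply Finset.sum_eq_zero
  intro b _
  rw [hcz b, zero_smul]

theorem pi_mul_apply (w₁ w₂ : W) (v : V) :
    G.π (w₁ * w₂) v = G.π w₁ (G.π w₂ v) := by
  rw [map_mul]
  rfl

theorem pi_inv_apply (w : W) (v : V) : G.π w⁻¹ (G.π w v) = v := by
  rw [← pi_mul_apply, inv_mul_cancel, map_one]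
  rfl

theorem pi_inv_apply' (w : W) (v : V) : G.π w (G.π w⁻¹ v) = v := by
  rw [← pi_mul_apply, mul_inv_cancel, map_one]
  rfl

theorem bil_reflect (i : B) (a b : V) :
    G.bil (G.π (cs.simple i) a) (G.π (cs.simple i) b) = G.bil a b := by
  rw [G.simple_refl, G.simple_refl]
  have hsymm1 := G.bil_symm (G.α i) a
  have hnorm := G.norm_one i
  simp only [map_sub, map_smul, LinearMap.sub_apply, LinearMap.smul_apply, smul_eq_mul]
  rw [hnorm]
  rw [← hsymm1]
  ring

theorem bil_invariant (w : W) : ∀ (a b : V),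
    G.bil (G.π w a) (G.π w b) = G.bil a b := by
  refine cs.simple_induction_left (p := fun w => ∀ a b : V, G.bil (G.π w a) (G.π w b) = G.bil a b) w ?_ ?_
  · intro a b
    rw [map_one]
    rfl
  · intro w i ih a b
    rw [pi_mul_apply, pi_mul_apply, bil_reflect, ih]

theorem root_bil_one {v : V} (hv : v ∈ G.Phi) : G.bil v v = 1 := by
  obtain ⟨w, i, rfl⟩ := hv
  rw [bil_invariant]
  exact G.norm_one i

theorem root_ne_zero {v : V} (hv : v ∈ G.Phi) : v ≠ 0 := by
  intro h
  have := root_bil_one G hv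
  rw [h] at this
  simp at this

theorem phi_stable {v : V} (w : W) (hv : v ∈ G.Phi) : G.π w v ∈ G.Phi := by
  obtain ⟨w', i, rfl⟩ := hv
  exact ⟨w * w', i, by rw [pi_mul_apply]⟩

theorem simple_apply_self_root (i : B) : G.π (cs.simple i) (G.α i) = -G.α i := by
  rw [G.simple_refl, G.norm_one]
  module

end ConeGeom

end StmtAux


namespace StmtAux

section Dihedral

variable {B : Type*} [Fintype B] {W : Type*} [Group W]
  {M : CoxeterMatrix B} {cs : CoxeterSystem M W}
  {V : Type*} [AddCommGroup V] [Module ℝ V] (G : GeomRep M cs V)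

theorem offdiag_nonpos (i j : B) (hij : i ≠ j) : G.bil (G.α i) (G.α j) ≤ 0 := by
  by_cases hm : M.M i j = 0
  · have := G.angle_infinite i j hij hm
    linarith
  · rw [G.angle_finite i j hij hm]
    have h2 : 2 ≤ M.M i j := by
      have := M.off_diagonal i j hij
      omega
    have hcos : 0 ≤ Real.cos (Real.pi / (M.M i j : ℝ)) := by
      apply Real.cos_nonneg_of_mem_Icc
      constructor
      · have : 0 ≤ Real.pi / (M.M i j : ℝ) := by
          apply div_nonneg Real.pi_pos.le
          positivity
        linarith [Real.pi_pos]
      · rw [div_le_div_iff₀ (by positivity) (by norm_num)]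
        have : (2 : ℝ) ≤ (M.M i j : ℝ) := by exact_mod_cast h2
        nlinarith [Real.pi_pos]
    linarith

theorem dihedral_finite (i j : B) (hij : i ≠ j) (hm : M.M i j ≠ 0) (r : ℕ) :
    (Even r → G.π (cs.wordProd (CoxeterSystem.alternatingWord i j r)) (G.α i) =
      (Real.sin (((r : ℝ) + 1) * (Real.pi / (M.M i j : ℝ))) /
        Real.sin (Real.pi / (M.M i j : ℝ))) • G.α i +
      (Real.sin ((r : ℝ) * (Real.pi / (M.M i j : ℝ))) /
        Real.sin (Real.pi / (M.M i j : ℝ))) • G.α j) ∧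
    (¬ Even r → G.π (cs.wordProd (CoxeterSystem.alternatingWord i j r)) (G.α i) =
      (Real.sin ((r : ℝ) * (Real.pi / (M.M i j : ℝ))) /
        Real.sin (Real.pi / (M.M i j : ℝ))) • G.α i +
      (Real.sin (((r : ℝ) + 1) * (Real.pi / (M.M i j : ℝ))) /
        Real.sin (Real.pi / (M.M i j : ℝ))) • G.α j) := by
  set θ := Real.pi / (M.M i j : ℝ) with hθ
  have h2 : 2 ≤ M.M i j := by
    have := M.off_diagonal i j hij
    omega
  have h2' : (2 : ℝ) ≤ (M.M i j : ℝ) := by exact_mod_cast h2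
  have hθpos : 0 < θ := by
    rw [hθ]
    apply div_pos Real.pi_pos
    linarith
  have hθlt : θ < Real.pi := by
    rw [hθ, div_lt_iff₀ (by linarith)]
    nlinarith [Real.pi_pos]
  have hsne : Real.sin θ ≠ 0 := by
    have := Real.sin_pos_of_pos_of_lt_pi hθpos hθlt
    linarith
  have hbji : G.bil (G.α j) (G.α i) = -Real.cos θ := by
    rw [G.bil_symm]
    exact G.angle_finite i j hij hm
  have hbij : G.bil (G.α i) (G.α j) = -Real.cos θ := G.angle_finite i j hij hm
  induction r with
  | zero =>
    constructor
    · intro _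
      show G.π (cs.wordProd []) (G.α i) = _
      rw [cs.wordProd_nil, map_one]
      push_cast
      rw [zero_mul, Real.sin_zero, zero_div, zero_smul, add_zero, zero_add, one_mul,
        div_self hsne, one_smul]
      rfl
    · intro h
      exact absurd Even.zero h
  | succ r ih =>
    have hsucc : CoxeterSystem.alternatingWord i j (r + 1)
        = (if Even r then j else i) :: CoxeterSystem.alternatingWord i j r :=
      CoxeterSystem.alternatingWord_succ' i j r
    have htri : Real.sin (((r : ℝ) + 1 + 1) * θ)
        = 2 * Real.cos θ * Real.sin (((r : ℝ) + 1) * θ) - Real.sin ((r : ℝ) * θ) := by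
      rw [show ((r : ℝ) + 1 + 1) * θ = ((r : ℝ) + 1) * θ + θ by ring,
        show (r : ℝ) * θ = ((r : ℝ) + 1) * θ - θ by ring,
        Real.sin_add, Real.sin_sub]
      ring
    rcases Nat.even_or_odd r with hev | hodd
    · -- r even : apply s_j, result for odd r+1
      have hx := ih.1 hev
      constructor
      · intro hcon
        rw [Nat.even_add_one] at hcon
        exact absurd hev hcon
      · intro _
        rw [hsucc, if_pos hev, cs.wordProd_cons, pi_mul_apply, hx, G.simple_refl]
        have hb : G.bil (G.α j)
            ((Real.sin (((r : ℝ) + 1) * θ) / Real.sin θ) • G.α i +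
             (Real.sin ((r : ℝ) * θ) / Real.sin θ) • G.α j)
            = (Real.sin (((r : ℝ) + 1) * θ) / Real.sin θ) * (-Real.cos θ)
              + (Real.sin ((r : ℝ) * θ) / Real.sin θ) := by
          rw [map_add, map_smul, map_smul, smul_eq_mul, smul_eq_mul, hbji, G.norm_one]
          ring
        rw [hb]
        push_cast
        have hQ : Real.sin ((r : ℝ) * θ) / Real.sin θ
            - 2 * ((Real.sin (((r : ℝ) + 1) * θ) / Real.sin θ) * (-Real.cos θ)
              + Real.sin ((r : ℝ) * θ) / Real.sin θ)
            = Real.sin (((r : ℝ) + 1 + 1) * θ) / Real.sin θ := by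
          rw [htri]
          field_simp
          ring
        rw [show (((r : ℝ) + 1) + 1) * θ = ((r : ℝ) + 1 + 1) * θ by ring, ← hQ]
        module
    · -- r odd : apply s_i, result for even r+1
      have hx := ih.2 (Nat.not_even_iff_odd.mpr hodd)
      constructor
      · intro _
        rw [hsucc, if_neg (Nat.not_even_iff_odd.mpr hodd), cs.wordProd_cons, pi_mul_apply, hx,
          G.simple_refl]
        have hb : G.bil (G.α i)
            ((Real.sin ((r : ℝ) * θ) / Real.sin θ) • G.α i +
             (Real.sin (((r : ℝ) + 1) * θ) / Real.sin θ) • G.α j)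
            = (Real.sin ((r : ℝ) * θ) / Real.sin θ)
              + (Real.sin (((r : ℝ) + 1) * θ) / Real.sin θ) * (-Real.cos θ) := by
          rw [map_add, map_smul, map_smul, smul_eq_mul, smul_eq_mul, hbij, G.norm_one]
          ring
        rw [hb]
        push_cast
        have hP : Real.sin ((r : ℝ) * θ) / Real.sin θ
            - 2 * (Real.sin ((r : ℝ) * θ) / Real.sin θ
              + (Real.sin (((r : ℝ) + 1) * θ) / Real.sin θ) * (-Real.cos θ))
            = Real.sin (((r : ℝ) + 1 + 1) * θ) / Real.sin θ := by
          rw [htri]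
          field_simp
          ring
        rw [show (((r : ℝ) + 1) + 1) * θ = ((r : ℝ) + 1 + 1) * θ by ring, ← hP]
        module
      · intro hcon
        rw [Nat.even_add_one] at hcon
        exact absurd (Nat.not_even_iff_odd.mpr hodd) hcon

theorem dihedral_infinite (i j : B) (hij : i ≠ j) (hm : M.M i j = 0) (r : ℕ) :
    ∃ p q : ℝ, 0 ≤ p ∧ 0 ≤ q ∧
      (Even r → q ≤ p) ∧ (¬ Even r → p ≤ q) ∧
      G.π (cs.wordProd (CoxeterSystem.alternatingWord i j r)) (G.α i) = p • G.α i + q • G.α j := by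
  have hbij : G.bil (G.α i) (G.α j) ≤ -1 := G.angle_infinite i j hij hm
  have hbji : G.bil (G.α j) (G.α i) ≤ -1 := by
    rw [G.bil_symm]
    exact hbij
  induction r with
  | zero =>
    refine ⟨1, 0, zero_le_one, le_refl 0, fun _ => zero_le_one, fun h => absurd Even.zero h, ?_⟩
    show G.π (cs.wordProd []) (G.α i) = _
    rw [cs.wordProd_nil, map_one]
    rw [one_smul, zero_smul, add_zero]
    rfl
  | succ r ih =>
    obtain ⟨p, q, hp, hq, hpq, hqp, hx⟩ := ih
    have hsucc : CoxeterSystem.alternatingWord i j (r + 1)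
        = (if Even r then j else i) :: CoxeterSystem.alternatingWord i j r :=
      CoxeterSystem.alternatingWord_succ' i j r
    rcases Nat.even_or_odd r with hev | hodd
    · -- apply s_j ; q' = -q - 2 c p ≥ p
      have hqlep := hpq hev
      refine ⟨p, -q - 2 * G.bil (G.α j) (G.α i) * p, hp, ?_, ?_, ?_, ?_⟩
      · nlinarith
      · intro hcon
        rw [Nat.even_add_one] at hcon
        exact absurd hev hcon
      · intro _
        nlinarith
      · rw [hsucc, if_pos hev, cs.wordProd_cons, pi_mul_apply, hx, G.simple_refl]
        have hb : G.bil (G.α j) (p • G.α i + q • G.α j)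
            = p * G.bil (G.α j) (G.α i) + q := by
          rw [map_add, map_smul, map_smul, smul_eq_mul, smul_eq_mul, G.norm_one]
          ring
        rw [hb]
        module
    · -- apply s_i ; p' = -p - 2 c q ≥ q
      have hpleq := hqp (Nat.not_even_iff_odd.mpr hodd)
      refine ⟨-p - 2 * G.bil (G.α i) (G.α j) * q, q, ?_, hq, ?_, ?_, ?_⟩
      · nlinarith
      · intro _
        nlinarith
      · intro hcon
        rw [Nat.even_add_one] at hcon
        exact absurd (Nat.not_even_iff_odd.mpr hodd) hcon
      · rw [hsucc, if_neg (Nat.not_even_iff_odd.mpr hodd), cs.wordProd_cons, pi_mul_apply, hx,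
          G.simple_refl]
        have hb : G.bil (G.α i) (p • G.α i + q • G.α j)
            = p + q * G.bil (G.α i) (G.α j) := by
          rw [map_add, map_smul, map_smul, smul_eq_mul, smul_eq_mul, G.norm_one]
          ring
        rw [hb]
        module

/-- The key rank-2 positivity: the alternating word applied to `α i` stays in the cone. -/
theorem dihedral_root_cone (i j : B) (hij : i ≠ j) (r : ℕ)
    (hr : M.M i j = 0 ∨ r + 1 ≤ M.M i j) :
    ∃ p q : ℝ, 0 ≤ p ∧ 0 ≤ q ∧
      G.π (cs.wordProd (CoxeterSystem.alternatingWord i j r)) (G.α i) = p • G.α i + q • G.α j := by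
  rcases hr with hm | hr
  · obtain ⟨p, q, hp, hq, _, _, hx⟩ := dihedral_infinite G i j hij hm r
    exact ⟨p, q, hp, hq, hx⟩
  · have hm : M.M i j ≠ 0 := by omega
    set θ := Real.pi / (M.M i j : ℝ) with hθ
    have h2 : 2 ≤ M.M i j := by
      have := M.off_diagonal i j hij
      omega
    have h2' : (2 : ℝ) ≤ (M.M i j : ℝ) := by exact_mod_cast h2
    have hθpos : 0 < θ := by
      rw [hθ]
      apply div_pos Real.pi_pos
      linarith
    have hsin : ∀ k : ℕ, k ≤ M.M i j → 0 ≤ Real.sin ((k : ℝ) * θ) := by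
      intro k hk
      apply Real.sin_nonneg_of_nonneg_of_le_pi
      · positivity
      · have hk' : (k : ℝ) ≤ (M.M i j : ℝ) := by exact_mod_cast hk
        calc (k : ℝ) * θ = (k : ℝ) * Real.pi / (M.M i j : ℝ) := by rw [hθ]; ring
        _ ≤ Real.pi := by
            rw [div_le_iff₀ (by linarith)]
            nlinarith [Real.pi_pos]
    have hsinθ : 0 < Real.sin θ := by
      apply Real.sin_pos_of_pos_of_lt_pi hθpos
      rw [hθ, div_lt_iff₀ (by linarith)]
      nlinarith [Real.pi_pos]
    have hs1 : 0 ≤ Real.sin ((r : ℝ) * θ) := by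
      have := hsin r (by omega)
      exact this
    have hs2 : 0 ≤ Real.sin (((r : ℝ) + 1) * θ) := by
      have := hsin (r + 1) (by omega)
      push_cast at this
      exact this
    rcases Nat.even_or_odd r with hev | hodd
    · refine ⟨Real.sin (((r : ℝ) + 1) * θ) / Real.sin θ,
        Real.sin ((r : ℝ) * θ) / Real.sin θ, ?_, ?_, ?_⟩
      · exact div_nonneg hs2 hsinθ.le
      · exact div_nonneg hs1 hsinθ.le
      · exact (dihedral_finite G i j hij hm r).1 hev
    · refine ⟨Real.sin ((r : ℝ) * θ) / Real.sin θ,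
        Real.sin (((r : ℝ) + 1) * θ) / Real.sin θ, ?_, ?_, ?_⟩
      · exact div_nonneg hs1 hsinθ.le
      · exact div_nonneg hs2 hsinθ.le
      · exact (dihedral_finite G i j hij hm r).2 (Nat.not_even_iff_odd.mpr hodd)

end Dihedral

end StmtAux

namespace StmtAux

section MainThm

variable {B : Type*} [Fintype B] {W : Type*} [Group W]
  {M : CoxeterMatrix B} {cs : CoxeterSystem M W}
  {V : Type*} [AddCommGroup V] [Module ℝ V] (G : GeomRep M cs V)

theorem alpha_mem_phiPos (i : B) : G.α i ∈ G.PhiPos :=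
  ⟨⟨1, i, by rw [map_one]; rfl⟩, mem_coneOf_of_mem ⟨i, rfl⟩⟩

/-- If a positive root is sent to a "negative" vector by a simple reflection, it is the
corresponding simple root. -/
theorem eq_simple_of_reflect_neg {i : B} {β : V} (hβ : β ∈ G.PhiPos)
    (hneg : -(G.π (cs.simple i) β) ∈ coneOf (Set.range G.α)) : β = G.α i := by
  classical
  obtain ⟨c, hc, hcs⟩ := mem_coneOf_range_iff.mp hβ.2
  obtain ⟨d, hd, hds⟩ := mem_coneOf_range_iff.mp hneg
  set r := G.bil (G.α i) β with hr
  have hrefl : G.π (cs.simple i) β = β - (2 * r) • G.α i := G.simple_refl i β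
  set e := fun b => c b + d b - (if b = i then 2 * r else 0) with he
  have hesum : ∑ b, e b • G.α b = 0 := by
    have h1 : ∑ b, e b • G.α b
        = (∑ b, c b • G.α b) + (∑ b, d b • G.α b) - (∑ b, (if b = i then 2 * r else 0) • G.α b) := by
      rw [← Finset.sum_add_distrib, ← Finset.sum_sub_distrib]
      apply Finset.sum_congr rfl
      intro b _
      rw [he]
      simp only
      rw [sub_smul, add_smul]
    have h2 : ∑ b, (if b = i then 2 * r else 0) • G.α b = (2 * r) • G.α i := by
      rw [Finset.sum_congr rfl (fun b _ => by
        show (if b = i then 2 * r else 0) • G.α b = if b = i then (2 * r) • G.α b else 0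
        split_ifs <;> simp)]
      rw [Finset.sum_ite_eq' Finset.univ i (fun b => (2 * r) • G.α b)]
      simp
    rw [h1, h2, hcs, hds, hrefl]
    abel
  have heb : ∀ b, b ≠ i → 0 ≤ e b := by
    intro b hb
    rw [he]
    simp only [if_neg hb]
    have := hc b
    have := hd b
    linarith
  have hei : 0 ≤ e i := by
    have h0 : G.bil (G.α i) (∑ b, e b • G.α b) = 0 := by rw [hesum]; simp
    rw [map_sum] at h0
    have h1 : ∑ b, G.bil (G.α i) (e b • G.α b) = e i + ∑ b ∈ Finset.univ.erase i, e b * G.bil (G.α i) (G.α b) := by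
      rw [← Finset.add_sum_erase Finset.univ (fun b => G.bil (G.α i) (e b • G.α b)) (Finset.mem_univ i)]
      congr 1
      · rw [map_smul, smul_eq_mul, G.norm_one, mul_one]
      · apply Finset.sum_congr rfl
        intro b _
        rw [map_smul, smul_eq_mul]
    rw [h1] at h0
    have h2 : ∑ b ∈ Finset.univ.erase i, e b * G.bil (G.α i) (G.α b) ≤ 0 := by
      apply Finset.sum_nonpos
      intro b hb
      have hbne : b ≠ i := Finset.ne_of_mem_erase hb
      exact mul_nonpos_of_nonneg_of_nonpos (heb b hbne) (offdiag_nonpos G i b (fun h => hbne h.symm))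
    linarith
  have hez := G.pos_indep e (fun b => by
    by_cases hb : b = i
    · rw [hb]; exact hei
    · exact heb b hb) hesum
  have hcz : ∀ b, b ≠ i → c b = 0 := by
    intro b hb
    have h3 := hez b
    rw [he] at h3
    simp only [if_neg hb] at h3
    have := hc b
    have := hd b
    linarith
  have hβi : β = c i • G.α i := by
    rw [← hcs]
    rw [← Finset.add_sum_erase Finset.univ (fun b => c b • G.α b) (Finset.mem_univ i)]
    rw [Finset.sum_eq_zero (fun b hb => by rw [hcz b (Finset.ne_of_mem_erase hb), zero_smul])]
    rw [add_zero]
  have hnorm : G.bil β β = 1 := root_bil_one G hβ.1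
  rw [hβi] at hnorm
  simp only [map_smul, LinearMap.smul_apply, smul_eq_mul, G.norm_one] at hnorm
  have hci : c i = 1 := by
    have h4 := hc i
    nlinarith
  rw [hβi, hci, one_smul]

theorem closure_word {i j : B} {u : W} (hu : u ∈ Subgroup.closure {cs.simple i, cs.simple j}) :
    ∃ l : List B, (∀ b ∈ l, b = i ∨ b = j) ∧ u = cs.wordProd l := by
  induction hu using Subgroup.closure_induction with
  | mem x hx =>
    rcases hx with hx | hx
    · exact ⟨[i], fun b hb => Or.inl (List.mem_singleton.mp hb), by rw [cs.wordProd_singleton, hx]⟩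
    · exact ⟨[j], fun b hb => Or.inr (List.mem_singleton.mp hb),
        by rw [cs.wordProd_singleton, Set.mem_singleton_iff.mp hx]⟩
  | one => exact ⟨[], by simp, by rw [cs.wordProd_nil]⟩
  | mul x y _ _ hx hy =>
    obtain ⟨l1, h1, rfl⟩ := hx
    obtain ⟨l2, h2, rfl⟩ := hy
    exact ⟨l1 ++ l2, fun b hb => by
      rcases List.mem_append.mp hb with h | h
      · exact h1 b h
      · exact h2 b h, by rw [cs.wordProd_append]⟩
  | inv x _ hx =>
    obtain ⟨l, hl, rfl⟩ := hx
    exact ⟨l.reverse, fun b hb => hl b (List.mem_reverse.mp hb), by rw [cs.wordProd_reverse]⟩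

theorem not_isReduced_dup (c : B) (t : List B) : ¬ cs.IsReduced (c :: c :: t) := by
  intro h
  have hp : cs.wordProd (c :: c :: t) = cs.wordProd t := by
    rw [cs.wordProd_cons, cs.wordProd_cons, cs.simple_mul_simple_cancel_left]
  unfold CoxeterSystem.IsReduced at h
  rw [hp] at h
  have := cs.length_wordProd_le t
  simp at h
  omega

theorem alternating_identify {i j : B} (hij : i ≠ j) :
    ∀ l : List B, cs.IsReduced l → (∀ b ∈ l, b = i ∨ b = j) →
    (l = [] ∨ l.getLast? = some j) → l = CoxeterSystem.alternatingWord i j l.length := by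
  intro l
  induction l with
  | nil => intro _ _ _; rfl
  | cons c t ihl =>
    intro hred hmem hlast
    rcases hlast with h | hlast
    · exact absurd h (List.cons_ne_nil c t)
    match t, ihl with
    | [], _ =>
      have hc : c = j := by
        have : (c :: ([] : List B)).getLast? = some c := rfl
        rw [this] at hlast
        exact Option.some_injective _ hlast
      rw [hc]
      rfl
    | c' :: t', ihl =>
      have htred : cs.IsReduced (c' :: t') := by
        have := CoxeterSystem.IsReduced.drop (ω := c :: c' :: t') hred (j := 1)
        simpa using this
      have htmem : ∀ b ∈ c' :: t', b = i ∨ b = j := fun b hb => hmem b (List.mem_cons_of_mem c hb)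
      have htlast : (c' :: t') = [] ∨ (c' :: t').getLast? = some j := by
        right
        rw [← hlast]
        rfl
      have hident := ihl htred htmem htlast
      have hcc' : c ≠ c' := by
        intro h
        rw [h] at hred
        exact not_isReduced_dup (cs := cs) c' t' hred
      -- head of alternating word
      set n := (c' :: t').length with hn
      have hn1 : n = t'.length + 1 := by simp [hn]
      have hhead : c' = (if Even t'.length then j else i) := by
        have := hident
        rw [hn1, CoxeterSystem.alternatingWord_succ' i j t'.length] at this
        exact (List.cons.injEq _ _ _ _ ▸ this).1
      have hc : c = (if Even n then j else i) := by
        rcases hmem c (List.mem_cons_self) with hci | hcj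
        · -- c = i ; need ¬ Even n
          rw [hci]
          rw [hn1]
          rcases Nat.even_or_odd t'.length with hev | hodd
          · rw [if_neg (by rw [Nat.even_add_one]; exact fun h => h hev)]
          · exfalso
            apply hcc'
            rw [hci, hhead, if_neg (Nat.not_even_iff_odd.mpr hodd)]
        · rw [hcj]
          rw [hn1]
          rcases Nat.even_or_odd t'.length with hev | hodd
          · exfalso
            apply hcc'
            rw [hcj, hhead, if_pos hev]
          · rw [if_pos (by rw [Nat.even_add_one]; exact Nat.not_even_iff_odd.mpr hodd)]
      show c :: (c' :: t') = CoxeterSystem.alternatingWord i j ((c' :: t').length + 1)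
      rw [CoxeterSystem.alternatingWord_succ' i j n, ← hc, ← hident]

/-- Humphreys 5.4: if `ℓ(w sᵢ) > ℓ(w)` then `w αᵢ` is a nonnegative combination of
simple roots. -/
theorem rootD : ∀ n : ℕ, ∀ w : W, cs.length w = n → ∀ i : B,
    cs.length (w * cs.simple i) = cs.length w + 1 →
    G.π w (G.α i) ∈ coneOf (Set.range G.α) := by
  intro n
  induction n using Nat.strong_induction_on with
  | _ n ih =>
    intro w hw i hwi
    rcases Nat.eq_zero_or_pos n with hn | hn
    · have hw1 : w = 1 := cs.length_eq_zero_iff.mp (by omega)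
      rw [hw1, map_one]
      exact mem_coneOf_of_mem ⟨i, rfl⟩
    · obtain ⟨l, hlred, hlw⟩ := cs.exists_reduced_word' w
      have hllen : l.length = n := by
        rw [← hw, hlw]
        exact hlred.symm
      have hlne : l ≠ [] := by
        intro h
        rw [h] at hllen
        simp at hllen
        omega
      set j := l.getLast hlne with hj
      have hwsj : w * cs.simple j = cs.wordProd l.dropLast := by
        conv_lhs => rw [hlw, ← List.dropLast_append_getLast hlne]
        rw [cs.wordProd_append, cs.wordProd_singleton, ← hj, mul_assoc,
          cs.simple_mul_simple_self, mul_one]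
      have hlenwj : cs.length (w * cs.simple j) < n := by
        rw [hwsj]
        have h1 := cs.length_wordProd_le l.dropLast
        have h2 : l.dropLast.length = n - 1 := by
          rw [List.length_dropLast, hllen]
        omega
      have hij : i ≠ j := by
        intro h
        rw [← h] at hlenwj
        omega
      classical
      have hex : ∃ k, ∃ v u : W, w = v * u ∧ u ∈ Subgroup.closure {cs.simple i, cs.simple j}
          ∧ cs.length v = k ∧ k + cs.length u = n := by
        refine ⟨cs.length (w * cs.simple j), w * cs.simple j, cs.simple j, ?_, ?_, rfl, ?_⟩
        · rw [cs.simple_mul_simple_cancel_right]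
        · exact Subgroup.subset_closure (Set.mem_insert_of_mem _ rfl)
        · rw [cs.length_simple]
          rcases cs.length_mul_simple w j with h | h <;> omega
      set k0 := Nat.find hex with hk0
      obtain ⟨v, u, hvu, hucl, hlv, hsum⟩ := Nat.find_spec hex
      have hk0le : k0 ≤ cs.length (w * cs.simple j) := Nat.find_min' hex (by
        refine ⟨w * cs.simple j, cs.simple j, ?_, ?_, rfl, ?_⟩
        · rw [cs.simple_mul_simple_cancel_right]
        · exact Subgroup.subset_closure (Set.mem_insert_of_mem _ rfl)
        · rw [cs.length_simple]
          rcases cs.length_mul_simple w j with h | h <;> omega)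
      have hk0lt : k0 < n := by omega
      have hvc : ∀ c : B, c = i ∨ c = j → cs.length (v * cs.simple c) = cs.length v + 1 := by
        intro c hc
        rcases cs.length_mul_simple v c with h | h
        · exact h
        · exfalso
          have hk0pos : 1 ≤ k0 := by omega
          apply Nat.find_min hex (show k0 - 1 < k0 by omega)
          refine ⟨v * cs.simple c, cs.simple c * u, ?_, ?_, ?_, ?_⟩
          · rw [mul_assoc, cs.simple_mul_simple_cancel_left, hvu]
          · apply Subgroup.mul_mem
            · apply Subgroup.subset_closure
              rcases hc with rfl | rfl
              · exact Set.mem_insert _ _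
              · exact Set.mem_insert_of_mem _ rfl
            · exact hucl
          · omega
          · have h1 : n ≤ cs.length (v * cs.simple c) + cs.length (cs.simple c * u) := by
              rw [← hw]
              calc cs.length w = cs.length ((v * cs.simple c) * (cs.simple c * u)) := by
                    rw [mul_assoc, cs.simple_mul_simple_cancel_left, hvu]
              _ ≤ _ := cs.length_mul_le _ _
            have h2 : cs.length (cs.simple c * u) ≤ 1 + cs.length u := by
              have := cs.length_mul_le (cs.simple c) u
              rw [cs.length_simple] at this
              exact this
            omega
      have hvi := hvc i (Or.inl rfl)
      have hvj := hvc j (Or.inr rfl)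
      have hlu : 1 ≤ cs.length u := by omega
      have husi : cs.length (u * cs.simple i) = cs.length u + 1 := by
        have h1 : n + 1 ≤ k0 + cs.length (u * cs.simple i) := by
          have : w * cs.simple i = v * (u * cs.simple i) := by
            rw [hvu, mul_assoc]
          calc n + 1 = cs.length (w * cs.simple i) := by omega
          _ = cs.length (v * (u * cs.simple i)) := by rw [this]
          _ ≤ cs.length v + cs.length (u * cs.simple i) := cs.length_mul_le _ _
          _ = k0 + cs.length (u * cs.simple i) := by rw [hlv]
        rcases cs.length_mul_simple u i with h | h
        · exact h
        · omega
      -- get a reduced word over {i, j} for u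
      obtain ⟨l1, hl1mem, hl1⟩ := closure_word (cs := cs) hucl
      obtain ⟨l2, hl2red, hl2prod, hl2mem⟩ := exists_reduced_subword cs l1
      have hl2u : cs.wordProd l2 = u := by rw [hl2prod, ← hl1]
      have hl2mem' : ∀ b ∈ l2, b = i ∨ b = j := fun b hb => hl1mem b (hl2mem b hb)
      have hl2len : l2.length = cs.length u := by
        rw [← hl2u]
        exact hl2red.symm
      have hl2ne : l2 ≠ [] := by
        intro h
        rw [h] at hl2len
        simp at hl2len
        omega
      have hlast : l2.getLast? = some j := by
        have hlastmem := hl2mem' (l2.getLast hl2ne) (List.getLast_mem hl2ne)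
        rcases hlastmem with h | h
        · exfalso
          have husi' : u * cs.simple i = cs.wordProd l2.dropLast := by
            conv_lhs => rw [← hl2u, ← List.dropLast_append_getLast hl2ne]
            rw [cs.wordProd_append, cs.wordProd_singleton, h, mul_assoc,
              cs.simple_mul_simple_self, mul_one]
          have := cs.length_wordProd_le l2.dropLast
          rw [← husi'] at this
          rw [List.length_dropLast, hl2len] at this
          omega
        · rw [List.getLast?_eq_getLast hl2ne, h]
      have hident : l2 = CoxeterSystem.alternatingWord i j l2.length :=
        alternating_identify (cs := cs) hij l2 hl2red hl2mem' (Or.inr hlast)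
      set r := l2.length with hrdef
      have hr : M.M i j = 0 ∨ r + 1 ≤ M.M i j := by
        by_cases hm : M.M i j = 0
        · exact Or.inl hm
        · right
          have hrle : r ≤ M.M i j := by
            by_contra hgt
            have := cs.not_isReduced_alternatingWord i j (m := r) hm (by omega)
            rw [← hident] at this
            exact this hl2red
          rcases Nat.lt_or_ge r (M.M i j) with h | h
          · omega
          · exfalso
            have hrm : r = M.M i j := by omega
            have hbraid := cs.prod_alternatingWord_eq_prod_alternatingWord_sub i j (M.M i j)
              (by omega)
            have hmm : M.M i j * 2 - M.M i j = M.M i j := by omega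
            rw [hmm] at hbraid
            have hm1 : M.M i j = (M.M i j - 1) + 1 := by omega
            have halt : CoxeterSystem.alternatingWord j i (M.M i j)
                = (CoxeterSystem.alternatingWord i j (M.M i j - 1)).concat i := by
              conv_lhs => rw [hm1]
              rw [CoxeterSystem.alternatingWord_succ]
            have hu2 : u = cs.wordProd (CoxeterSystem.alternatingWord i j (M.M i j - 1)) 
                * cs.simple i := by
              rw [← hl2u, hident, hrm, hbraid, halt, cs.wordProd_concat]
            have : u * cs.simple i = cs.wordProd (CoxeterSystem.alternatingWord i j (M.M i j - 1)) := by
              rw [hu2, mul_assoc, cs.simple_mul_simple_self, mul_one]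
            have hle := cs.length_wordProd_le (CoxeterSystem.alternatingWord i j (M.M i j - 1))
            rw [← this] at hle
            rw [CoxeterSystem.length_alternatingWord] at hle
            rw [husi, ← hl2len, hrm] at hle
            omega
      obtain ⟨p, q, hp, hq, hpq⟩ := dihedral_root_cone G i j hij r hr
      rw [← hident, hl2u] at hpq
      have hfinal : G.π w (G.α i) = p • G.π v (G.α i) + q • G.π v (G.α j) := by
        rw [hvu, pi_mul_apply, hpq, map_add, map_smul, map_smul]
      rw [hfinal]
      exact add_mem_coneOf
        (smul_mem_coneOf hp (ih k0 hk0lt v hlv i hvi))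
        (smul_mem_coneOf hq (ih k0 hk0lt v hlv j hvj))

end MainThm

end StmtAux

namespace StmtAux

section Assemble

variable {B : Type*} [Fintype B] {W : Type*} [Group W]
  {M : CoxeterMatrix B} {cs : CoxeterSystem M W}
  {V : Type*} [AddCommGroup V] [Module ℝ V] (G : GeomRep M cs V)

theorem root_pos_of_length_up {w : W} {i : B}
    (h : cs.length (w * cs.simple i) = cs.length w + 1) :
    G.π w (G.α i) ∈ G.PhiPos :=
  ⟨⟨w, i, rfl⟩, rootD G (cs.length w) w rfl i h⟩

theorem root_neg_of_length_down {w : W} {i : B}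
    (h : cs.length (w * cs.simple i) + 1 = cs.length w) :
    -(G.π w (G.α i)) ∈ G.PhiPos := by
  have h2 : cs.length ((w * cs.simple i) * cs.simple i)
      = cs.length (w * cs.simple i) + 1 := by
    rw [cs.simple_mul_simple_cancel_right]
    omega
  have hmem := root_pos_of_length_up G h2
  have heq : G.π (w * cs.simple i) (G.α i) = -(G.π w (G.α i)) := by
    rw [pi_mul_apply, simple_apply_self_root, map_neg]
  rwa [heq] at hmem

theorem root_dichotomy {φ : V} (hφ : φ ∈ G.Phi) : φ ∈ G.PhiPos ∨ -φ ∈ G.PhiPos := by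
  obtain ⟨w, i, rfl⟩ := hφ
  rcases cs.length_mul_simple w i with h | h
  · exact Or.inl (root_pos_of_length_up G h)
  · exact Or.inr (root_neg_of_length_down G h)

theorem phiPos_both_false {γ : V} (h1 : γ ∈ G.PhiPos) (h2 : -γ ∈ G.PhiPos) : False :=
  root_ne_zero G h1.1 (cone_inter_neg_eq_zero G h1.2 h2.2)

theorem N_step {w : W} {i : B} (h : cs.length (w * cs.simple i) = cs.length w + 1) :
    G.N w ⊆ G.N (w * cs.simple i) := by
  rintro γ ⟨hγpos, x, hx, hγ⟩
  have hβ : -x ∈ G.PhiPos := Set.mem_neg.mp hx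
  refine ⟨hγpos, G.π (cs.simple i) x, ?_, ?_⟩
  · -- π (s i) x ∈ -PhiPos
    rw [Set.mem_neg]
    have hsiβ : G.π (cs.simple i) (-x) ∈ G.Phi := phi_stable G _ hβ.1
    rcases root_dichotomy G hsiβ with hpos | hneg
    · rwa [map_neg] at hpos
    · exfalso
      have hβeq : -x = G.α i := eq_simple_of_reflect_neg G hβ hneg.2
      have hγeq : γ = -(G.π w (G.α i)) := by
        rw [← hγ, show x = -(G.α i) by rw [← hβeq, neg_neg], map_neg]
      apply phiPos_both_false G hγpos
      rw [hγeq, neg_neg]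
      exact root_pos_of_length_up G h
  · rw [(pi_mul_apply G (w * cs.simple i) (cs.simple i) x).symm,
      cs.simple_mul_simple_cancel_right]
    exact hγ

theorem pos_of_not_mem_N {w : W} {γ : V} (hγ : γ ∈ G.PhiPos) (hn : γ ∉ G.N w) :
    G.π w⁻¹ γ ∈ G.PhiPos := by
  have h1 : G.π w⁻¹ γ ∈ G.Phi := phi_stable G _ hγ.1
  rcases root_dichotomy G h1 with h | h
  · exact h
  · exfalso
    apply hn
    exact ⟨hγ, G.π w⁻¹ γ, Set.mem_neg.mpr h, pi_inv_apply' G w γ⟩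

theorem neg_of_mem_N {w : W} {γ : V} (hγ : γ ∈ G.N w) : -(G.π w⁻¹ γ) ∈ G.PhiPos := by
  obtain ⟨hp, x, hx, hγ⟩ := hγ
  have hxe : G.π w⁻¹ γ = x := by rw [← hγ, pi_inv_apply]
  rw [hxe]
  exact Set.mem_neg.mp hx

end Assemble

end StmtAux

/-- The inversion set of an infinite reduced word is separable. -/
theorem stmt16 {B : Type*} [Fintype B] {W : Type*} [Group W]
    {M : CoxeterMatrix B} {cs : CoxeterSystem M W}
    {V : Type*} [AddCommGroup V] [Module ℝ V] (G : GeomRep M cs V)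
    (ω : ℕ → B) (hred : ∀ n, cs.IsReduced (List.ofFn fun i : Fin n => ω i)) :
    G.IsSeparable (⋃ n : ℕ, G.N (cs.wordProd (List.ofFn fun i : Fin n => ω i))) := by
  classical
  set wseq := fun n : ℕ => cs.wordProd (List.ofFn fun i : Fin n => ω i) with hwseq
  have hlen : ∀ n, cs.length (wseq n) = n := by
    intro n
    have h := hred n
    unfold CoxeterSystem.IsReduced at h
    rw [hwseq]
    simp only
    rw [h, List.length_ofFn]
  have hstep : ∀ n, wseq (n + 1) = wseq n * cs.simple (ω n) := by
    intro n
    rw [hwseq]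
    simp only
    have hofn : (List.ofFn fun i : Fin (n+1) => ω i)
        = (List.ofFn fun i : Fin n => ω i) ++ [ω n] := by
      have h1 := List.ofFn_succ' (fun i : Fin (n+1) => ω i)
      simpa [List.concat_eq_append, Fin.coe_castSucc, Fin.val_last] using h1
    rw [hofn, cs.wordProd_append, cs.wordProd_singleton]
  have hmono : ∀ a b : ℕ, a ≤ b → G.N (wseq a) ⊆ G.N (wseq b) := by
    intro a b hab
    induction b with
    | zero =>
      have : a = 0 := by omega
      rw [this]
    | succ b ihb =>
      rcases Nat.lt_or_ge a (b + 1) with hlt | hge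
      · have hsub := ihb (by omega)
        refine hsub.trans ?_
        rw [hstep b]
        apply StmtAux.N_step G
        rw [← hstep b, hlen b, hlen (b + 1)]
      · have : a = b + 1 := by omega
        rw [this]
  apply Set.Subset.antisymm
  · rintro v ⟨hv1, hv2⟩
    obtain ⟨n, c, f, hc, hf, hsum⟩ := hv1
    choose k hk using fun i : Fin n => Set.mem_iUnion.mp (hf i)
    set K := Finset.univ.sup k with hK
    have hfK : ∀ i, f i ∈ G.N (wseq K) :=
      fun i => hmono (k i) K (Finset.le_sup (Finset.mem_univ i)) (hk i)
    have hTv1 : -(G.π (wseq K)⁻¹ v) ∈ coneOf (Set.range G.α) := by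
      rw [← hsum, map_sum]
      have hneg : -(∑ i, G.π (wseq K)⁻¹ (c i • f i))
          = ∑ i, c i • (-(G.π (wseq K)⁻¹ (f i))) := by
        rw [← Finset.sum_neg_distrib]
        apply Finset.sum_congr rfl
        intro i _
        rw [map_smul, smul_neg]
      rw [hneg]
      exact StmtAux.sum_smul_mem_coneOf _ _ _ (fun i _ => hc i)
        (fun i _ => (StmtAux.neg_of_mem_N G (hfK i)).2)
    have hTv2 : G.π (wseq K)⁻¹ v ∈ coneOf (Set.range G.α) := by
      obtain ⟨m2, d, g, hd, hg, hsum2⟩ := hv2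
      rw [← hsum2, map_sum]
      have hrw : ∑ i2, G.π (wseq K)⁻¹ (d i2 • g i2)
          = ∑ i2, d i2 • G.π (wseq K)⁻¹ (g i2) := by
        apply Finset.sum_congr rfl
        intro i2 _
        rw [map_smul]
      rw [hrw]
      apply StmtAux.sum_smul_mem_coneOf _ _ _ (fun i2 _ => hd i2)
      intro i2 _
      have hgi := hg i2
      have hnot : g i2 ∉ G.N (wseq K) :=
        fun hmem => hgi.2 (Set.mem_iUnion.mpr ⟨K, hmem⟩)
      exact (StmtAux.pos_of_not_mem_N G hgi.1 hnot).2
    have hT0 : G.π (wseq K)⁻¹ v = 0 := StmtAux.cone_inter_neg_eq_zero G hTv2 hTv1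
    have hv0 : v = 0 := by
      have h := congrArg (G.π (wseq K)) hT0
      rw [StmtAux.pi_inv_apply' G (wseq K) v, map_zero] at h
      exact h
    rw [Set.mem_singleton_iff]
    exact hv0
  · intro v hv
    rw [Set.mem_singleton_iff] at hv
    rw [hv]
    exact ⟨StmtAux.zero_mem_coneOf _, StmtAux.zero_mem_coneOf _⟩
end
end
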